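/- arXiv:2302.13260 — 4 statements merged into one kernel-verified Lean document; each statement's English description precedes it below -/
import Mathlib

section
/- Let k ≥ 1 and let (x_1,y_1), …, (x_k,y_k) be points in ℕ² with all coordinates positive. Let P be the polygonal path (convex polygon) with vertices v_0 = (0,0) and v_m = (x_1+⋯+x_m, y_1+⋯+y_m) for 1 ≤ m ≤ k. If the slopes y_1/x_1 < y_2/x_2 < ⋯ < y_k/x_k are strictly increasing, then twice the area of the convex hull of {v_0, v_1, …, v_k} equals ∑_{1 ≤ l₁ < l₂ ≤ k} (x_{l₁} y_{l₂} − x_{l₂} y_{l₁}). -/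
open MeasureTheory

set_option maxHeartbeats 1000000

lemma line_null (a b c : ℝ) (h : a ≠ 0 ∨ b ≠ 0) :
    volume {p : ℝ × ℝ | a * p.1 + b * p.2 = c} = 0 := by
  set f : ℝ × ℝ →ₗ[ℝ] ℝ := a • LinearMap.fst ℝ ℝ ℝ + b • LinearMap.snd ℝ ℝ ℝ with hf
  have hfapp : ∀ p : ℝ × ℝ, f p = a * p.1 + b * p.2 := by
    intro p; simp [hf, smul_eq_mul]
  have hker : volume (LinearMap.ker f : Set (ℝ × ℝ)) = 0 := by
    apply Measure.addHaar_submodule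
    intro htop
    have h1 : f (1, 0) = 0 := (LinearMap.mem_ker).1 (htop ▸ Submodule.mem_top)
    have h2 : f (0, 1) = 0 := (LinearMap.mem_ker).1 (htop ▸ Submodule.mem_top)
    rw [hfapp] at h1 h2; simp at h1 h2
    rcases h with h | h
    · exact h h1
    · exact h h2
  obtain ⟨p₀, hp₀⟩ : ∃ p₀ : ℝ × ℝ, a * p₀.1 + b * p₀.2 = c := by
    rcases h with h | h
    · exact ⟨(c / a, 0), by field_simp; ring⟩
    · exact ⟨(0, c / b), by field_simp; ring⟩
  have hset : {p : ℝ × ℝ | a * p.1 + b * p.2 = c} = (fun q => -p₀ + q) ⁻¹' (LinearMap.ker f : Set (ℝ × ℝ)) := by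
    ext q
    simp only [Set.mem_setOf_eq, Set.mem_preimage, SetLike.mem_coe, LinearMap.mem_ker, hfapp,
      Prod.fst_add, Prod.snd_add, Prod.fst_neg, Prod.snd_neg]
    constructor
    · intro hq; ring_nf; linarith
    · intro hq; ring_nf at hq; linarith
  rw [hset, measure_preimage_add, hker]

lemma stdTriangle_eq :
    convexHull ℝ {((0:ℝ),(0:ℝ)), (1,0), (0,1)} =
      {p : ℝ × ℝ | 0 ≤ p.1 ∧ 0 ≤ p.2 ∧ p.1 + p.2 ≤ 1} := by
  apply Set.Subset.antisymm
  · apply convexHull_min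
    · intro p hp
      rcases hp with h | h | h <;> subst h <;> norm_num
    · rintro p ⟨hp1, hp2, hp3⟩ q ⟨hq1, hq2, hq3⟩ a b ha hb hab
      have hx : a • p + b • q = (a * p.1 + b * q.1, a * p.2 + b * q.2) := rfl
      refine ⟨?_, ?_, ?_⟩ <;> rw [hx] <;> simp only <;> nlinarith
  · rintro p ⟨h1, h2, h3⟩
    have := (convex_convexHull ℝ {((0:ℝ),(0:ℝ)), (1,0), (0,1)}).sum_mem
      (t := (Finset.univ : Finset (Fin 3)))
      (w := ![1 - p.1 - p.2, p.1, p.2]) (z := ![(0,0), (1,0), (0,1)])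
      (by intro i _; fin_cases i <;> simp <;> linarith)
      (by simp [Fin.sum_univ_three]; ring)
      (by intro i _; fin_cases i <;> apply subset_convexHull <;> simp)
    convert this using 1
    simp [Fin.sum_univ_three, Prod.ext_iff]

lemma stdTriangle_volume :
    volume (convexHull ℝ {((0:ℝ),(0:ℝ)), (1,0), (0,1)}) = ENNReal.ofReal (1/2) := by
  rw [stdTriangle_eq]
  set R := regionBetween (fun _ : ℝ => (0:ℝ)) (fun x => 1 - x) (Set.Ioo 0 1) with hR
  have hint : IntegrableOn (fun x : ℝ => 1 - x) (Set.Ioo 0 1) volume := by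
    apply IntegrableOn.mono_set (t := Set.Icc 0 1) _ Set.Ioo_subset_Icc_self
    exact (Continuous.continuousOn (by continuity)).integrableOn_compact isCompact_Icc
  have hvolR : volume R = ENNReal.ofReal (1/2) := by
    have h := volume_regionBetween_eq_integral (f := fun _ : ℝ => (0:ℝ))
      (g := fun x => 1 - x) (s := Set.Ioo 0 1) (μ := volume)
      (integrableOn_const measure_Ioo_lt_top.ne)
      hint
      measurableSet_Ioo
      (by intro x hx; simp only [Set.mem_Ioo] at hx; linarith [hx.2])
    rw [← Measure.volume_eq_prod] at h
    rw [hR, h]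
    congr 1
    simp only [Pi.sub_apply, sub_zero]
    rw [← MeasureTheory.integral_Ioc_eq_integral_Ioo,
      ← intervalIntegral.integral_of_le zero_le_one]
    rw [intervalIntegral.integral_sub intervalIntegrable_const
      intervalIntegral.intervalIntegrable_id]
    simp
    norm_num
  have hsub1 : R ⊆ {p : ℝ × ℝ | 0 ≤ p.1 ∧ 0 ≤ p.2 ∧ p.1 + p.2 ≤ 1} := by
    rintro ⟨px, py⟩ ⟨hx, hy⟩
    simp only [Set.mem_Ioo] at hx hy
    exact ⟨le_of_lt hx.1, le_of_lt hy.1, by linarith [hy.2]⟩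
  have hsub2 : {p : ℝ × ℝ | 0 ≤ p.1 ∧ 0 ≤ p.2 ∧ p.1 + p.2 ≤ 1} ⊆
      R ∪ ({p : ℝ × ℝ | 1 * p.1 + 0 * p.2 = 0} ∪ {p : ℝ × ℝ | 0 * p.1 + 1 * p.2 = 0}
        ∪ {p : ℝ × ℝ | 1 * p.1 + 1 * p.2 = 1}) := by
    rintro ⟨px, py⟩ ⟨h1, h2, h3⟩
    simp only [Set.mem_union, Set.mem_setOf_eq, one_mul, zero_mul, add_zero, zero_add]
    rcases eq_or_lt_of_le h1 with h1' | h1'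
    · right; left; left; exact h1'.symm
    rcases eq_or_lt_of_le h2 with h2' | h2'
    · right; left; right; exact h2'.symm
    rcases eq_or_lt_of_le h3 with h3' | h3'
    · right; right; exact h3'
    · left
      refine ⟨Set.mem_Ioo.2 ⟨h1', by dsimp only at *; linarith⟩,
        Set.mem_Ioo.2 ⟨by dsimp only at *; linarith, by dsimp only at *; linarith⟩⟩
  have hnull : volume ({p : ℝ × ℝ | 1 * p.1 + 0 * p.2 = 0} ∪ {p : ℝ × ℝ | 0 * p.1 + 1 * p.2 = 0}
        ∪ {p : ℝ × ℝ | 1 * p.1 + 1 * p.2 = 1}) = 0 := by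
    refine measure_union_null (measure_union_null ?_ ?_) ?_ <;>
      apply line_null <;> norm_num
  refine le_antisymm ?_ ?_
  · calc volume {p : ℝ × ℝ | 0 ≤ p.1 ∧ 0 ≤ p.2 ∧ p.1 + p.2 ≤ 1}
        ≤ volume (R ∪ _) := measure_mono hsub2
      _ ≤ volume R + _ := measure_union_le _ _
      _ = ENNReal.ofReal (1/2) := by rw [hvolR, hnull, add_zero]
  · rw [← hvolR]; exact measure_mono hsub1

lemma triangle_volume (a b : ℝ × ℝ) :
    volume (convexHull ℝ {(0 : ℝ × ℝ), a, b}) =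
      ENNReal.ofReal (|a.1 * b.2 - a.2 * b.1| / 2) := by
  set L : ℝ × ℝ →ₗ[ℝ] ℝ × ℝ :=
    (LinearMap.toSpanSingleton ℝ (ℝ × ℝ) a).coprod (LinearMap.toSpanSingleton ℝ (ℝ × ℝ) b) with hL
  have hLapp : ∀ p : ℝ × ℝ, L p = p.1 • a + p.2 • b := fun p => rfl
  have hdet : LinearMap.det L = a.1 * b.2 - a.2 * b.1 := by
    rw [← LinearMap.det_toMatrix (Module.Basis.finTwoProd ℝ) L]
    have : LinearMap.toMatrix (Module.Basis.finTwoProd ℝ) (Module.Basis.finTwoProd ℝ) L =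
        Matrix.of ![![a.1, b.1], ![a.2, b.2]] := by
      ext i j
      fin_cases i <;> fin_cases j <;>
        simp [LinearMap.toMatrix_apply, hLapp, Module.Basis.finTwoProd]
    rw [this, Matrix.det_fin_two]
    simp
    ring
  have himg : convexHull ℝ {(0 : ℝ × ℝ), a, b} =
      ⇑L '' (convexHull ℝ {((0:ℝ),(0:ℝ)), (1,0), (0,1)}) := by
    rw [show ⇑L = ⇑L.toAffineMap from rfl, L.toAffineMap.image_convexHull]
    congr 1
    have h0 : L.toAffineMap (0,0) = (0 : ℝ × ℝ) := by simp [hLapp]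
    have h1 : L.toAffineMap (1,0) = a := by simp [LinearMap.toAffineMap, hLapp]
    have h2 : L.toAffineMap (0,1) = b := by simp [LinearMap.toAffineMap, hLapp]
    rw [Set.image_insert_eq, Set.image_insert_eq, Set.image_singleton, h0, h1, h2]
  rw [himg, Measure.addHaar_image_linearMap, stdTriangle_volume, hdet,
    ← ENNReal.ofReal_mul (abs_nonneg _)]
  ring_nf

def Xc (u : ℕ → ℝ) (m : ℕ) : ℝ := ∑ l ∈ Finset.range m, u l

lemma key1_eq (u w : ℕ → ℝ) (i m : ℕ) (him : i ≤ m) :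
    Xc u i * Xc w m - Xc w i * Xc u m
      = ∑ a ∈ Finset.range i, ∑ b ∈ Finset.Ico i m, (u a * w b - w a * u b) := by
  have hXu : Xc u m = Xc u i + ∑ l ∈ Finset.Ico i m, u l :=
    (Finset.sum_range_add_sum_Ico u him).symm
  have hXw : Xc w m = Xc w i + ∑ l ∈ Finset.Ico i m, w l :=
    (Finset.sum_range_add_sum_Ico w him).symm
  rw [hXu, hXw]
  have h1 : Xc u i * ∑ l ∈ Finset.Ico i m, w l
      = ∑ a ∈ Finset.range i, ∑ b ∈ Finset.Ico i m, u a * w b := Finset.sum_mul_sum _ _ _ _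
  have h2 : Xc w i * ∑ l ∈ Finset.Ico i m, u l
      = ∑ a ∈ Finset.range i, ∑ b ∈ Finset.Ico i m, w a * u b := Finset.sum_mul_sum _ _ _ _
  have : ∑ a ∈ Finset.range i, ∑ b ∈ Finset.Ico i m, (u a * w b - w a * u b)
      = (∑ a ∈ Finset.range i, ∑ b ∈ Finset.Ico i m, u a * w b)
        - ∑ a ∈ Finset.range i, ∑ b ∈ Finset.Ico i m, w a * u b := by
    rw [← Finset.sum_sub_distrib]
    exact Finset.sum_congr rfl fun a _ => by rw [← Finset.sum_sub_distrib]
  rw [this, ← h1, ← h2]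
  ring

lemma key1 (u w : ℕ → ℝ) (k : ℕ)
    (hc : ∀ i j, i < j → j < k → w i * u j < w j * u i)
    (i m : ℕ) (him : i ≤ m) (hmk : m ≤ k) :
    0 ≤ Xc u i * Xc w m - Xc w i * Xc u m := by
  rw [key1_eq u w i m him]
  apply Finset.sum_nonneg
  intro a ha
  apply Finset.sum_nonneg
  intro b hb
  rw [Finset.mem_range] at ha
  rw [Finset.mem_Ico] at hb
  have := hc a b (lt_of_lt_of_le ha hb.1) (lt_of_lt_of_le hb.2 hmk)
  linarith

lemma key1' (u w : ℕ → ℝ) (k : ℕ)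
    (hc : ∀ i j, i < j → j < k → w i * u j < w j * u i)
    (i m : ℕ) (hi : 1 ≤ i) (him : i < m) (hmk : m ≤ k) :
    0 < Xc u i * Xc w m - Xc w i * Xc u m := by
  rw [key1_eq u w i m him.le]
  apply Finset.sum_pos
  · intro a ha
    apply Finset.sum_pos
    · intro b hb
      rw [Finset.mem_range] at ha
      rw [Finset.mem_Ico] at hb
      have := hc a b (lt_of_lt_of_le ha hb.1) (lt_of_lt_of_le hb.2 hmk)
      linarith
    · exact ⟨i, Finset.mem_Ico.2 ⟨le_refl i, him⟩⟩
  · exact ⟨0, Finset.mem_range.2 hi⟩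

lemma key2 (u w : ℕ → ℝ) (k : ℕ)
    (hc : ∀ i j, i < j → j < k → w i * u j < w j * u i)
    (i m : ℕ) (him : i ≤ m) (hmk : m < k) :
    w m * (Xc u i - Xc u m) - u m * (Xc w i - Xc w m) ≤ 0 := by
  have hXu : Xc u m = Xc u i + ∑ l ∈ Finset.Ico i m, u l :=
    (Finset.sum_range_add_sum_Ico u him).symm
  have hXw : Xc w m = Xc w i + ∑ l ∈ Finset.Ico i m, w l :=
    (Finset.sum_range_add_sum_Ico w him).symm
  rw [hXu, hXw]
  have : w m * (Xc u i - (Xc u i + ∑ l ∈ Finset.Ico i m, u l))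
      - u m * (Xc w i - (Xc w i + ∑ l ∈ Finset.Ico i m, w l))
      = -∑ l ∈ Finset.Ico i m, (w m * u l - u m * w l) := by
    rw [Finset.sum_sub_distrib, ← Finset.mul_sum, ← Finset.mul_sum]; ring
  rw [this, neg_nonpos]
  apply Finset.sum_nonneg
  intro l hl
  rw [Finset.mem_Ico] at hl
  have := hc l m hl.2 hmk
  linarith

lemma key2' (u w : ℕ → ℝ) (k : ℕ)
    (hc : ∀ i j, i < j → j < k → w i * u j < w j * u i)
    (i m : ℕ) (him : i < m) (hmk : m < k) :
    w m * (Xc u i - Xc u m) - u m * (Xc w i - Xc w m) < 0 := by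
  have hXu : Xc u m = Xc u i + ∑ l ∈ Finset.Ico i m, u l :=
    (Finset.sum_range_add_sum_Ico u him.le).symm
  have hXw : Xc w m = Xc w i + ∑ l ∈ Finset.Ico i m, w l :=
    (Finset.sum_range_add_sum_Ico w him.le).symm
  rw [hXu, hXw]
  have : w m * (Xc u i - (Xc u i + ∑ l ∈ Finset.Ico i m, u l))
      - u m * (Xc w i - (Xc w i + ∑ l ∈ Finset.Ico i m, w l))
      = -∑ l ∈ Finset.Ico i m, (w m * u l - u m * w l) := by
    rw [Finset.sum_sub_distrib, ← Finset.mul_sum, ← Finset.mul_sum]; ring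
  rw [this, neg_lt, neg_zero]
  apply Finset.sum_pos
  · intro l hl
    rw [Finset.mem_Ico] at hl
    have := hc l m hl.2 hmk
    linarith
  · exact ⟨i, Finset.mem_Ico.2 ⟨le_refl i, him⟩⟩

lemma comb_eq (a b : ℝ) (x y : ℝ × ℝ) :
    a • x + b • y = (a * x.1 + b * y.1, a * x.2 + b * y.2) := rfl

lemma convex_hs_ge (a b c : ℝ) : Convex ℝ {z : ℝ × ℝ | c ≤ a * z.1 + b * z.2} := by
  rintro z hz y hy s t hs ht hst
  simp only [Set.mem_setOf_eq] at *
  rw [comb_eq]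
  simp only
  have h1 := mul_le_mul_of_nonneg_left hz hs
  have h2 := mul_le_mul_of_nonneg_left hy ht
  have h3 : c = s * c + t * c := by rw [← add_mul, hst, one_mul]
  nlinarith [h1, h2, h3]

lemma convex_hs_le (a b c : ℝ) : Convex ℝ {z : ℝ × ℝ | a * z.1 + b * z.2 ≤ c} := by
  rintro z hz y hy s t hs ht hst
  simp only [Set.mem_setOf_eq] at *
  rw [comb_eq]
  simp only
  have h1 := mul_le_mul_of_nonneg_left hz hs
  have h2 := mul_le_mul_of_nonneg_left hy ht
  have h3 : c = s * c + t * c := by rw [← add_mul, hst, one_mul]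
  nlinarith [h1, h2, h3]

lemma hull_step (S : Set (ℝ × ℝ)) (h0S : (0 : ℝ × ℝ) ∈ S) (q0 p : ℝ × ℝ)
    (hq0 : q0 ∈ S) (A B C D E : ℝ)
    (hφS : ∀ z ∈ S, 0 ≤ A * z.1 + B * z.2)
    (hφp : A * p.1 + B * p.2 < 0)
    (hψS : ∀ z ∈ S, C * z.1 + D * z.2 + E ≤ 0)
    (hψp : C * p.1 + D * p.2 + E = 0)
    (hxS : ∀ z ∈ S, 0 ≤ z.1) (hxp : 0 ≤ p.1)
    (hline : ∀ r : ℝ × ℝ, A * r.1 + B * r.2 = 0 → 0 ≤ r.1 →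
      C * r.1 + D * r.2 + E ≤ 0 → r ∈ segment ℝ (0 : ℝ × ℝ) q0) :
    convexHull ℝ (insert p S) = convexHull ℝ S ∪ convexHull ℝ {(0 : ℝ × ℝ), q0, p} := by
  apply Set.Subset.antisymm
  · rw [convexHull_insert ⟨0, h0S⟩]
    rintro z hz
    rw [mem_convexJoin] at hz
    obtain ⟨p', hp', q, hq, hseg⟩ := hz
    rw [Set.mem_singleton_iff] at hp'
    rcases hp' with rfl
    -- facts about hull S
    have hφA : ∀ z ∈ convexHull ℝ S, 0 ≤ A * z.1 + B * z.2 := fun z hz =>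
      convexHull_min (fun y hy => by simp only [Set.mem_setOf_eq]; exact hφS y hy)
        (convex_hs_ge A B 0) hz
    have hψA : ∀ z ∈ convexHull ℝ S, C * z.1 + D * z.2 ≤ -E := fun z hz =>
      convexHull_min (fun y hy => by simp only [Set.mem_setOf_eq]; linarith [hψS y hy])
        (convex_hs_le C D (-E)) hz
    have hxA : ∀ z ∈ convexHull ℝ S, 0 ≤ z.1 := by
      intro z hz
      have := convexHull_min (s := S) (t := {z : ℝ × ℝ | 0 ≤ 1 * z.1 + 0 * z.2})
        (fun y hy => by simpa using hxS y hy)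
        (convex_hs_ge 1 0 0) hz
      simpa using this
    obtain ⟨c, d, hc, hd, hcd, hzeq⟩ := hseg
    set F := A * q.1 + B * q.2 with hF
    set G := -(A * p'.1 + B * p'.2) with hG
    have hF0 : 0 ≤ F := hφA q hq
    have hG0 : 0 < G := by rw [hG]; linarith
    have hFG : 0 < F + G := by linarith
    set c' := F / (F + G) with hc'
    set d' := G / (F + G) with hd'
    have hc'0 : 0 ≤ c' := div_nonneg hF0 hFG.le
    have hd'0 : 0 < d' := div_pos hG0 hFG
    have hcd' : c' + d' = 1 := by rw [hc', hd']; field_simp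
    set r : ℝ × ℝ := (c' * p'.1 + d' * q.1, c' * p'.2 + d' * q.2) with hr
    have hφr : A * r.1 + B * r.2 = 0 := by
      have h1 : A * r.1 + B * r.2 = c' * (-G) + d' * F := by
        rw [hr]; simp only; rw [hF, hG]; ring
      rw [h1, hc', hd']
      field_simp
      ring
    have hr1 : 0 ≤ r.1 := by
      rw [hr]; simp only
      have := hxA q hq
      positivity
    have hψr : C * r.1 + D * r.2 + E ≤ 0 := by
      rw [hr]; simp only
      have hq1 : d' * (C * q.1 + D * q.2) ≤ d' * (-E) :=
        mul_le_mul_of_nonneg_left (hψA q hq) hd'0.le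
      have hp1 : c' * (C * p'.1 + D * p'.2 + E) = 0 := by rw [hψp]; ring
      have hE : c' * E + d' * E = E := by rw [← add_mul, hcd', one_mul]
      nlinarith [hq1, hp1, hE]
    have hrseg : r ∈ segment ℝ (0 : ℝ × ℝ) q0 := hline r hφr hr1 hψr
    have hrA : r ∈ convexHull ℝ S :=
      (convex_convexHull ℝ S).segment_subset (subset_convexHull ℝ S h0S)
        (subset_convexHull ℝ S hq0) hrseg
    have hrT : r ∈ convexHull ℝ {(0:ℝ×ℝ), q0, p'} :=
      (convex_convexHull ℝ _).segment_subset
        (subset_convexHull ℝ _ (by simp)) (subset_convexHull ℝ _ (by simp)) hrseg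
    have hφz : A * z.1 + B * z.2 = d * F - c * G := by
      rw [← hzeq, comb_eq]; simp only; rw [hF, hG]; ring
    by_cases hcase : 0 ≤ A * z.1 + B * z.2
    · -- z ∈ hull S
      left
      by_cases hc0 : c = 0
      · subst hc0
        have hd1 : d = 1 := by linarith
        subst hd1
        rw [← hzeq]
        simpa using hq
      · have hcpos : 0 < c := lt_of_le_of_ne hc (Ne.symm hc0)
        rw [hφz] at hcase
        have hFpos : 0 < F := by nlinarith
        have hcc' : c ≤ c' := by
          rw [hc', le_div_iff₀ hFG]
          nlinarith
        have hc'pos : 0 < c' := div_pos hFpos hFG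
        set θ := c / c' with hθ
        have hθ0 : 0 ≤ θ := div_nonneg hc (le_of_lt hc'pos)
        have hθ1 : θ ≤ 1 := (div_le_one hc'pos).2 hcc'
        have e1 : θ * c' = c := by rw [hθ]; field_simp
        have e3 : θ * c' + θ * d' = θ := by rw [← mul_add, hcd', mul_one]
        have e2 : 1 - θ + θ * d' = d := by linarith
        have hzcomb : z = (1 - θ) • q + θ • r := by
          rw [comb_eq, ← hzeq, comb_eq, hr]
          simp only [Prod.mk.injEq]
          constructor
          · linear_combination (-p'.1) * e1 + (-q.1) * e2
          · linear_combination (-p'.2) * e1 + (-q.2) * e2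
        rw [hzcomb]
        exact (convex_convexHull ℝ S).segment_subset hq hrA
          ⟨1 - θ, θ, by linarith, hθ0, by ring, rfl⟩
    · right
      push_neg at hcase
      rw [hφz] at hcase
      have hdd' : d ≤ d' := by
        rw [hd', le_div_iff₀ hFG]
        nlinarith
      set θ := d / d' with hθ
      have hθ0 : 0 ≤ θ := div_nonneg hd hd'0.le
      have hθ1 : θ ≤ 1 := (div_le_one hd'0).2 hdd'
      have e1 : θ * d' = d := by rw [hθ]; field_simp
      have e3 : θ * c' + θ * d' = θ := by rw [← mul_add, hcd', mul_one]
      have e2 : 1 - θ + θ * c' = c := by linarith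
      have hzcomb : z = (1 - θ) • p' + θ • r := by
        rw [comb_eq, ← hzeq, comb_eq, hr]
        simp only [Prod.mk.injEq]
        constructor
        · linear_combination (-p'.1) * e2 + (-q.1) * e1
        · linear_combination (-p'.2) * e2 + (-q.2) * e1
      rw [hzcomb]
      exact (convex_convexHull ℝ _).segment_subset
        (subset_convexHull ℝ _ (by simp)) hrT
        ⟨1 - θ, θ, by linarith, hθ0, by ring, rfl⟩
  · apply Set.union_subset
    · exact convexHull_mono (Set.subset_insert p S)
    · apply convexHull_mono
      rintro y (h | h | h) <;> subst h
      · exact Set.mem_insert_of_mem _ h0S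
      · exact Set.mem_insert_of_mem _ hq0
      · exact Set.mem_insert _ _



lemma aux_volume (u w : ℕ → ℝ) (k : ℕ) (hu : ∀ l, l < k → 0 < u l) (hw : ∀ l, l < k → 0 < w l)
    (hc : ∀ i j, i < j → j < k → w i * u j < w j * u i) :
    ∀ n, 1 ≤ n → n ≤ k →
      volume (convexHull ℝ ((fun m => ((Xc u m, Xc w m) : ℝ × ℝ)) '' Set.Iic n)) =
        ENNReal.ofReal ((∑ m ∈ Finset.Ico 1 n, (Xc u m * w m - Xc w m * u m)) / 2) := by
  -- preliminary facts
  have hX0 : Xc u 0 = 0 := by simp [Xc]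
  have hY0 : Xc w 0 = 0 := by simp [Xc]
  have hXnonneg : ∀ i, i ≤ k → 0 ≤ Xc u i := by
    intro i hik
    apply Finset.sum_nonneg
    intro l hl
    exact (hu l (lt_of_lt_of_le (Finset.mem_range.1 hl) hik)).le
  have hXpos : ∀ i, 1 ≤ i → i ≤ k → 0 < Xc u i := by
    intro i h1 hik
    apply Finset.sum_pos
    · intro l hl; exact hu l (lt_of_lt_of_le (Finset.mem_range.1 hl) hik)
    · exact ⟨0, Finset.mem_range.2 h1⟩
  have hterm : ∀ m, 1 ≤ m → m < k → 0 < Xc u m * w m - Xc w m * u m := by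
    intro m h1 hmk
    have h := key1' u w k hc m (m+1) h1 (Nat.lt_succ_self m) hmk
    have hXs : Xc u (m+1) = Xc u m + u m := Finset.sum_range_succ u m
    have hYs : Xc w (m+1) = Xc w m + w m := Finset.sum_range_succ w m
    rw [hXs, hYs] at h
    linarith
  intro n
  induction n with
  | zero => omega
  | succ n ih =>
    intro _ hnk1
    by_cases hn0 : n = 0
    · -- base case n+1 = 1
      subst hn0
      have himg : (fun m => ((Xc u m, Xc w m) : ℝ × ℝ)) '' Set.Iic 1
          = {(0 : ℝ × ℝ), (Xc u 1, Xc w 1)} := by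
        have : Set.Iic 1 = {0, 1} := by ext i; simp [Set.mem_Iic]; omega
        rw [this, Set.image_insert_eq, Set.image_singleton, hX0, hY0]
        rfl
      rw [himg]
      have hseg : convexHull ℝ {(0 : ℝ × ℝ), (Xc u 1, Xc w 1)}
          ⊆ {z : ℝ × ℝ | w 0 * z.1 + (-(u 0)) * z.2 = 0} := by
        apply convexHull_min
        · rintro z (h | h) <;> subst h <;> simp only [Set.mem_setOf_eq]
          · simp
          · have h1 : Xc u 1 = u 0 := by simp [Xc]
            have h2 : Xc w 1 = w 0 := by simp [Xc]
            simp only [h1, h2]; ring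
        · have := (convex_hs_le (w 0) (-(u 0)) 0).inter (convex_hs_ge (w 0) (-(u 0)) 0)
          rw [show {z : ℝ × ℝ | w 0 * z.1 + (-(u 0)) * z.2 = 0} = {z : ℝ × ℝ | w 0 * z.1 + (-(u 0)) * z.2 ≤ 0} ∩ {z : ℝ × ℝ | 0 ≤ w 0 * z.1 + (-(u 0)) * z.2} from ?_]; exact this
          ext z; simp only [Set.mem_setOf_eq, Set.mem_inter_iff]
          constructor
          · intro h; exact ⟨le_of_eq h, ge_of_eq h⟩
          · intro h; exact le_antisymm h.1 h.2
      have h0 : volume (convexHull ℝ {(0 : ℝ × ℝ), (Xc u 1, Xc w 1)}) = 0 :=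
        measure_mono_null hseg (line_null _ _ _ (Or.inl (hw 0 (by omega)).ne'))
      rw [h0]
      simp
    · -- inductive step
      have hn1 : 1 ≤ n := by omega
      have hnk : n ≤ k := by omega
      have hnk' : n < k := by omega
      have IH := ih hn1 hnk
      set P : ℕ → ℝ × ℝ := fun m => ((Xc u m, Xc w m) : ℝ × ℝ) with hP
      set S : Set (ℝ × ℝ) := P '' Set.Iic n with hS
      set p : ℝ × ℝ := P (n+1) with hp
      have hP0 : P 0 = 0 := by simp only [hP]; rw [hX0, hY0]; rfl
      have h0S : (0 : ℝ × ℝ) ∈ S := ⟨0, Set.mem_Iic.2 (Nat.zero_le n), hP0⟩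
      have hq0S : P n ∈ S := ⟨n, Set.mem_Iic.2 le_rfl, rfl⟩
      have himg : P '' Set.Iic (n+1) = insert p S := by
        rw [hS, hp]
        have : Set.Iic (n+1) = insert (n+1) (Set.Iic n) := by
          ext i; simp [Set.mem_Iic]; omega
        rw [this, Set.image_insert_eq]
      have hXs : Xc u (n+1) = Xc u n + u n := Finset.sum_range_succ u n
      have hYs : Xc w (n+1) = Xc w n + w n := Finset.sum_range_succ w n
      -- functionals
      set A := Xc w n with hA
      set B := -(Xc u n) with hB
      set C := w n with hC
      set D := -(u n) with hD
      set E := -(w n * Xc u n) + u n * Xc w n with hE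
      have hXnpos : 0 < Xc u n := hXpos n hn1 hnk
      have hdet : 0 < Xc u n * w n - Xc w n * u n := hterm n hn1 hnk'
      have hdecomp : convexHull ℝ (insert p S)
          = convexHull ℝ S ∪ convexHull ℝ {(0 : ℝ × ℝ), P n, p} := by
        apply hull_step S h0S (P n) p hq0S A B C D E
        · rintro z ⟨i, hi, rfl⟩
          have := key1 u w k hc i n (Set.mem_Iic.1 hi) hnk
          simp only [hP]; simp only [hA, hB]; linarith
        · have := key1' u w k hc n (n+1) hn1 (Nat.lt_succ_self n) hnk1
          simp only [hp, hP]; simp only [hA, hB]; linarith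
        · rintro z ⟨i, hi, rfl⟩
          have := key2 u w k hc i n (Set.mem_Iic.1 hi) hnk'
          simp only [hP]; simp only [hC, hD, hE]; linarith
        · simp only [hp, hP]; simp only [hC, hD, hE, hXs, hYs]; ring
        · rintro z ⟨i, hi, rfl⟩
          simp only [hP]; exact hXnonneg i (le_trans (Set.mem_Iic.1 hi) hnk)
        · simp only [hp, hP]; exact hXnonneg (n+1) hnk1
        · -- hline
          intro r hφr hr1 hψr
          simp only [hA, hB] at hφr
          simp only [hC, hD, hE] at hψr
          set s := r.1 / Xc u n with hs
          have hs0 : 0 ≤ s := div_nonneg hr1 hXnpos.le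
          have hr2 : r.2 = s * Xc w n := by
            rw [hs]
            field_simp
            nlinarith [hφr]
          have hr1' : r.1 = s * Xc u n := by rw [hs]; field_simp
          have hwpos : 0 < w n * Xc u n - u n * Xc w n := by
            have := key2' u w k hc 0 n hn1 hnk'
            rw [hX0, hY0] at this
            linarith
          have hs1 : s ≤ 1 := by
            rw [hr1', hr2] at hψr
            nlinarith [hψr, hwpos]
          refine ⟨1 - s, s, by linarith, hs0, by ring, ?_⟩
          rw [comb_eq]
          have hrr : r = (s * Xc u n, s * Xc w n) := by
            rw [Prod.ext_iff]; exact ⟨hr1', hr2⟩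
          rw [hrr]
          simp [hP]
      -- measure computation
      have hSfin : S.Finite := (Set.finite_Iic n).image P
      have hAcl : MeasurableSet (convexHull ℝ S) :=
        (hSfin.isCompact_convexHull ℝ).isClosed.measurableSet
      have hTcl : MeasurableSet (convexHull ℝ {(0 : ℝ × ℝ), P n, p}) :=
        (((Set.finite_singleton p).insert _ |>.insert _).isCompact_convexHull ℝ).isClosed.measurableSet
      have hinter : volume (convexHull ℝ S ∩ convexHull ℝ {(0 : ℝ × ℝ), P n, p}) = 0 := by
        refine measure_mono_null (t := {z : ℝ × ℝ | A * z.1 + B * z.2 = 0}) ?_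
          (line_null A B 0 (Or.inr (by simp only [hB, neg_ne_zero]; exact hXnpos.ne')))
        rintro z ⟨hzA, hzT⟩
        show A * z.1 + B * z.2 = 0
        have h1 : 0 ≤ A * z.1 + B * z.2 := by
          refine convexHull_min ?_ (convex_hs_ge A B 0) hzA
          rintro y ⟨i, hi, rfl⟩
          have := key1 u w k hc i n (Set.mem_Iic.1 hi) hnk
          simp only [hP]; simp only [Set.mem_setOf_eq, hA, hB]; linarith
        have h2 : A * z.1 + B * z.2 ≤ 0 := by
          refine convexHull_min ?_ (convex_hs_le A B 0) hzT
          rintro y (h | h | h) <;> subst h <;> simp only [Set.mem_setOf_eq]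
          · simp
          · have he : A * Xc u n + B * Xc w n = 0 := by rw [hA, hB]; ring
            linarith
          · have := key1' u w k hc n (n+1) hn1 (Nat.lt_succ_self n) hnk1
            simp only [hA, hB]; linarith
        exact le_antisymm h2 h1
      have hunion : volume (convexHull ℝ S ∪ convexHull ℝ {(0 : ℝ × ℝ), P n, p})
          = volume (convexHull ℝ S) + volume (convexHull ℝ {(0 : ℝ × ℝ), P n, p}) := by
        have := measure_union_add_inter (μ := volume) (convexHull ℝ S) hTcl
        rw [hinter, add_zero] at this
        exact this
      have hT : volume (convexHull ℝ {(0 : ℝ × ℝ), P n, p})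
          = ENNReal.ofReal ((Xc u n * w n - Xc w n * u n) / 2) := by
        rw [triangle_volume (P n) p]
        congr 1
        have hval : (P n).1 * p.2 - (P n).2 * p.1 = Xc u n * w n - Xc w n * u n := by
          simp only [hp, hP]; simp only [hXs, hYs]; ring
        rw [hval, abs_of_pos hdet]
      have hsum : (∑ m ∈ Finset.Ico 1 (n+1), (Xc u m * w m - Xc w m * u m))
          = (∑ m ∈ Finset.Ico 1 n, (Xc u m * w m - Xc w m * u m))
            + (Xc u n * w n - Xc w n * u n) := Finset.sum_Ico_succ_top hn1 _
      have hsum_nonneg : 0 ≤ ∑ m ∈ Finset.Ico 1 n, (Xc u m * w m - Xc w m * u m) := by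
        apply Finset.sum_nonneg
        intro m hm
        rw [Finset.mem_Ico] at hm
        exact (hterm m hm.1 (by omega)).le
      rw [himg, hdecomp, hunion, IH, hT, hsum]
      rw [← ENNReal.ofReal_add (by positivity) (by positivity)]
      congr 1
      ring



lemma hterm_ax (u w : ℕ → ℝ) (k : ℕ)
    (hc : ∀ i j, i < j → j < k → w i * u j < w j * u i)
    (m : ℕ) (h1 : 1 ≤ m) (hmk : m < k) : 0 < Xc u m * w m - Xc w m * u m := by
  have h := key1' u w k hc m (m+1) h1 (Nat.lt_succ_self m) hmk
  have hXs : Xc u (m+1) = Xc u m + u m := Finset.sum_range_succ u m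
  have hYs : Xc w (m+1) = Xc w m + w m := Finset.sum_range_succ w m
  rw [hXs, hYs] at h
  linarith

/-- If `(x₁,y₁), …, (x_k,y_k)` are pairs of positive naturals with strictly increasing slopes,
and `v₀ = (0,0)`, `v_m = (x₁+⋯+x_m, y₁+⋯+y_m)`, then twice the area of the convex hull of
`{v₀, …, v_k}` equals `∑_{l₁<l₂} (x_{l₁} y_{l₂} − x_{l₂} y_{l₁})`. -/
theorem stmt1 (k : ℕ) (hk : 1 ≤ k) (x y : Fin k → ℕ)
    (hx : ∀ l, 0 < x l) (hy : ∀ l, 0 < y l)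
    (hslope : ∀ l₁ l₂ : Fin k, l₁ < l₂ → (y l₁ : ℚ) / (x l₁ : ℚ) < (y l₂ : ℚ) / (x l₂ : ℚ))
    (v : Fin (k + 1) → ℝ × ℝ)
    (hv : ∀ m : Fin (k + 1),
      v m = ((∑ l : Fin k, if (l : ℕ) < (m : ℕ) then (x l : ℝ) else 0),
             (∑ l : Fin k, if (l : ℕ) < (m : ℕ) then (y l : ℝ) else 0))) :
    2 * (volume (convexHull ℝ (Set.range v))).toReal =
      ∑ l₂ : Fin k, ∑ l₁ : Fin k, if l₁ < l₂ then
        ((x l₁ : ℝ) * (y l₂ : ℝ) - (x l₂ : ℝ) * (y l₁ : ℝ)) else 0 := by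
  classical
  set u : ℕ → ℝ := fun l => if h : l < k then (x ⟨l, h⟩ : ℝ) else 1 with hu_def
  set w : ℕ → ℝ := fun l => if h : l < k then (y ⟨l, h⟩ : ℝ) else 1 with hw_def
  have hu : ∀ l, l < k → 0 < u l := by
    intro l hl
    simp only [hu_def, dif_pos hl]
    exact_mod_cast hx ⟨l, hl⟩
  have hw : ∀ l, l < k → 0 < w l := by
    intro l hl
    simp only [hw_def, dif_pos hl]
    exact_mod_cast hy ⟨l, hl⟩
  have hc : ∀ i j, i < j → j < k → w i * u j < w j * u i := by
    intro i j hij hjk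
    have hik : i < k := lt_trans hij hjk
    simp only [hu_def, hw_def, dif_pos hik, dif_pos hjk]
    have hq := hslope ⟨i, hik⟩ ⟨j, hjk⟩ (by simp only [Fin.mk_lt_mk]; exact hij)
    rw [div_lt_div_iff₀ (by exact_mod_cast hx ⟨i, hik⟩) (by exact_mod_cast hx ⟨j, hjk⟩)] at hq
    have hq' : (y ⟨i, hik⟩ : ℕ) * (x ⟨j, hjk⟩ : ℕ) < (y ⟨j, hjk⟩ : ℕ) * (x ⟨i, hik⟩ : ℕ) := by
      exact_mod_cast hq
    exact_mod_cast hq'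
  -- generic sum conversion
  have hsum_gen : ∀ (F : ℕ → ℝ) (G : Fin k → ℝ), (∀ l : Fin k, F ↑l = G l) → ∀ (m : ℕ), m ≤ k →
      (∑ l : Fin k, if (l : ℕ) < m then G l else 0) = ∑ l ∈ Finset.range m, F l := by
    intro F G hFG m hm
    have h1 : (∑ l : Fin k, if (l : ℕ) < m then G l else 0)
        = ∑ l ∈ Finset.range k, (if l < m then F l else 0) := by
      rw [Finset.sum_range fun l => if l < m then F l else 0]
      apply Finset.sum_congr rfl
      intro l _
      by_cases h : (l : ℕ) < m <;> simp [h, hFG l]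
    rw [h1]
    rw [← Finset.sum_subset (Finset.range_subset_range.2 hm)]
    · apply Finset.sum_congr rfl
      intro l hl
      rw [if_pos (Finset.mem_range.1 hl)]
    · intro l _ hl
      rw [if_neg (fun hc => hl (Finset.mem_range.2 hc))]
  have hxu : ∀ l : Fin k, u ↑l = (x l : ℝ) := by
    intro l; simp only [hu_def, dif_pos l.isLt]
  have hyw : ∀ l : Fin k, w ↑l = (y l : ℝ) := by
    intro l; simp only [hw_def, dif_pos l.isLt]
  have hPv : ∀ m : Fin (k+1), v m = ((Xc u ↑m, Xc w ↑m) : ℝ × ℝ) := by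
    intro m
    rw [hv m]
    have hmk : (m : ℕ) ≤ k := Nat.lt_succ_iff.1 m.isLt
    rw [hsum_gen u (fun l => (x l : ℝ)) hxu ↑m hmk,
        hsum_gen w (fun l => (y l : ℝ)) hyw ↑m hmk]
    rfl
  have hrange : Set.range v = (fun m => ((Xc u m, Xc w m) : ℝ × ℝ)) '' Set.Iic k := by
    ext z
    constructor
    · rintro ⟨m, rfl⟩
      exact ⟨↑m, Set.mem_Iic.2 (Nat.lt_succ_iff.1 m.isLt), (hPv m).symm⟩
    · rintro ⟨n, hn, rfl⟩
      exact ⟨⟨n, Nat.lt_succ_iff.2 (Set.mem_Iic.1 hn)⟩, hPv ⟨n, Nat.lt_succ_iff.2 (Set.mem_Iic.1 hn)⟩⟩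
  have hvol := aux_volume u w k hu hw hc k hk le_rfl
  rw [hrange, hvol]
  have hS0 : 0 ≤ ∑ m ∈ Finset.Ico 1 k, (Xc u m * w m - Xc w m * u m) := by
    apply Finset.sum_nonneg
    intro m hm
    rw [Finset.mem_Ico] at hm
    exact (hterm_ax u w k hc m hm.1 hm.2).le
  rw [ENNReal.toReal_ofReal (by positivity)]
  rw [show 2 * ((∑ m ∈ Finset.Ico 1 k, (Xc u m * w m - Xc w m * u m)) / 2)
      = ∑ m ∈ Finset.Ico 1 k, (Xc u m * w m - Xc w m * u m) by ring]
  -- final sum identity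
  have hinner : ∀ l₂ : Fin k,
      (∑ l₁ : Fin k, if l₁ < l₂ then ((x l₁ : ℝ) * (y l₂ : ℝ) - (x l₂ : ℝ) * (y l₁ : ℝ)) else 0)
        = ∑ l ∈ Finset.range ↑l₂, (u l * w ↑l₂ - u ↑l₂ * w l) := by
    intro l₂
    have := hsum_gen (fun l => u l * w ↑l₂ - u ↑l₂ * w l)
      (fun l₁ => (x l₁ : ℝ) * (y l₂ : ℝ) - (x l₂ : ℝ) * (y l₁ : ℝ))
      (fun l₁ => by rw [hxu l₁, hyw l₁, hxu l₂, hyw l₂]) ↑l₂ (le_of_lt l₂.isLt)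
    rw [← this]
    apply Finset.sum_congr rfl
    intro l₁ _
    congr 1
  rw [show (∑ l₂ : Fin k, ∑ l₁ : Fin k, if l₁ < l₂ then
        ((x l₁ : ℝ) * (y l₂ : ℝ) - (x l₂ : ℝ) * (y l₁ : ℝ)) else 0)
      = ∑ l₂ : Fin k, ∑ l ∈ Finset.range ↑l₂, (u l * w ↑l₂ - u ↑l₂ * w l) from
    Finset.sum_congr rfl fun l₂ _ => hinner l₂]
  rw [Fin.sum_univ_eq_sum_range (fun m => ∑ l ∈ Finset.range m, (u l * w m - u m * w l)) k]
  -- range k = Ico 0 k, drop m = 0 term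
  rw [Finset.range_eq_Ico, ← Finset.sum_Ico_consecutive _ (Nat.zero_le 1) hk]
  simp only [show Finset.Ico 0 1 = {0} from rfl, Finset.sum_singleton, Finset.Ico_self,
    Finset.range_zero, Finset.sum_empty, zero_add, ← Finset.range_eq_Ico]
  apply Finset.sum_congr rfl
  intro m _
  rw [Xc, Xc, Finset.sum_mul, Finset.sum_mul, ← Finset.sum_sub_distrib]
  apply Finset.sum_congr rfl
  intro l _
  ring
end

section
/- Fix positive integers i, j and let Δ be the triangle with vertices (0,0), (i,0), (i,j). There is a bijection, for each k ≥ 1, between the set C_k of tuples ((x_l,y_l))_{l≤k} of pairs of positive integers with x_1+⋯+x_k = i, y_1+⋯+y_k = j, and y_1/x_1 < ⋯ < y_k/x_k, and the set of convex (k+1)-gons P with lattice-point vertices contained in Δ, having the segment L from (0,0) to (i,j) as an edge, and touching neither the horizontal edge nor the vertical edge of Δ except at (0,0) and (i,j). The bijection sends ((x_l,y_l)) to the polygon with vertices (0,0), (x_1,y_1), (x_1+x_2, y_1+y_2), …, (i,j). -/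
/-- vertical segment membership -/
lemma seg_vert {c u P : ℝ × ℝ} (hc : c.1 = P.1) (hu : u.1 = P.1)
    (h1 : c.2 ≤ P.2) (h2 : P.2 ≤ u.2) : P ∈ segment ℝ c u := by
  rcases (segment_eq_Icc (le_trans h1 h2)).symm ▸ Set.mem_Icc.2 ⟨h1, h2⟩ with h
  rcases h with ⟨a, b, ha, hb, hab, hP⟩
  exact ⟨a, b, ha, hb, hab, by
    apply Prod.ext
    · simp [Prod.fst_add, Prod.smul_fst, hc, hu]
      calc a * P.1 + b * P.1 = (a + b) * P.1 := by ring
      _ = P.1 := by rw [hab]; ring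
    · simpa using hP⟩

/-- Workhorse: a point below line L (from (0,0) to (i,j)) and on-or-above the chord from A to B,
with x-coordinate between those of A and B, lies in the hull of {A, B, 0, (i,j)}. -/
lemma hull_quad (i j : ℕ) (hi : 0 < i) (A B v : ℤ × ℤ)
    (hab : A.1 < B.1) (h1 : A.1 ≤ v.1) (h2 : v.1 ≤ B.1)
    (hchord : (v.1 - A.1) * (B.2 - A.2) ≤ (v.2 - A.2) * (B.1 - A.1))
    (hL : (i : ℤ) * v.2 ≤ (j : ℤ) * v.1)
    (hv0 : 0 ≤ v.1) (hvi : v.1 ≤ (i : ℤ)) :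
    ((v.1 : ℝ), (v.2 : ℝ)) ∈ convexHull ℝ
      ({((A.1 : ℝ), (A.2 : ℝ)), ((B.1 : ℝ), (B.2 : ℝ)), ((0 : ℝ), (0 : ℝ)),
        ((i : ℝ), (j : ℝ))} : Set (ℝ × ℝ)) := by
  set a1 := (A.1 : ℝ) with ha1; set a2 := (A.2 : ℝ) with ha2
  set b1 := (B.1 : ℝ) with hb1; set b2 := (B.2 : ℝ) with hb2
  set p1 := (v.1 : ℝ) with hp1; set p2 := (v.2 : ℝ) with hp2
  have hb : (0:ℝ) < b1 - a1 := by
    have : (A.1 : ℝ) < (B.1 : ℝ) := by exact_mod_cast hab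
    linarith
  have h1' : a1 ≤ p1 := by rw [ha1, hp1]; exact_mod_cast h1
  have h2' : p1 ≤ b1 := by rw [hb1, hp1]; exact_mod_cast h2
  have hchord' : (p1 - a1) * (b2 - a2) ≤ (p2 - a2) * (b1 - a1) := by
    rw [ha1, ha2, hb1, hb2, hp1, hp2]; exact_mod_cast hchord
  have hL' : (i:ℝ) * p2 ≤ (j:ℝ) * p1 := by rw [hp1, hp2]; exact_mod_cast hL
  have hv0' : 0 ≤ p1 := by rw [hp1]; exact_mod_cast hv0
  have hvi' : p1 ≤ (i:ℝ) := by rw [hp1]; exact_mod_cast hvi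
  have hi' : (0:ℝ) < i := by exact_mod_cast hi
  set t : ℝ := (p1 - a1) / (b1 - a1) with ht
  have ht0 : 0 ≤ t := div_nonneg (by linarith) hb.le
  have ht1 : t ≤ 1 := (div_le_one hb).2 (by linarith)
  set c : ℝ × ℝ := (p1, a2 + t * (b2 - a2)) with hcdef
  set u : ℝ × ℝ := (p1, (j : ℝ) * p1 / i) with hudef
  have hcseg : c ∈ segment ℝ (a1, a2) (b1, b2) := by
    refine ⟨1 - t, t, by linarith, ht0, by ring, ?_⟩
    apply Prod.ext
    · show (1 - t) * a1 + t * b1 = p1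
      have : t * (b1 - a1) = p1 - a1 := div_mul_cancel₀ _ hb.ne'
      nlinarith [this]
    · show (1 - t) * a2 + t * b2 = a2 + t * (b2 - a2)
      ring
  have huseg : u ∈ segment ℝ ((0:ℝ), (0:ℝ)) ((i:ℝ), (j:ℝ)) := by
    refine ⟨1 - p1 / i, p1 / i, by
      have : p1 / i ≤ 1 := (div_le_one hi').2 hvi'
      linarith, div_nonneg hv0' hi'.le, by ring, ?_⟩
    apply Prod.ext
    · show (1 - p1 / i) * 0 + p1 / i * (i:ℝ) = p1
      field_simp
      ring
    · show (1 - p1 / i) * 0 + p1 / i * (j:ℝ) = (j:ℝ) * p1 / i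
      field_simp; ring
  have hc2 : c.2 ≤ p2 := by
    show a2 + t * (b2 - a2) ≤ p2
    have : t * (b2 - a2) ≤ p2 - a2 := by
      rw [ht, div_mul_eq_mul_div, div_le_iff₀ hb]
      exact hchord'
    linarith
  have hu2 : p2 ≤ u.2 := by
    show p2 ≤ (j:ℝ) * p1 / i
    rw [le_div_iff₀ hi']
    nlinarith [hL']
  have hPcu : (p1, p2) ∈ segment ℝ c u := seg_vert rfl rfl hc2 hu2
  have hcv := convex_convexHull ℝ ({((A.1 : ℝ), (A.2 : ℝ)), ((B.1 : ℝ), (B.2 : ℝ)),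
      ((0 : ℝ), (0 : ℝ)), ((i : ℝ), (j : ℝ))} : Set (ℝ × ℝ))
  have hsub := subset_convexHull ℝ ({((A.1 : ℝ), (A.2 : ℝ)), ((B.1 : ℝ), (B.2 : ℝ)),
      ((0 : ℝ), (0 : ℝ)), ((i : ℝ), (j : ℝ))} : Set (ℝ × ℝ))
  have hcmem : c ∈ convexHull ℝ _ := (hcv.segment_subset (hsub (by exact Set.mem_insert _ _)) (hsub (by exact Set.mem_insert_of_mem _ (Set.mem_insert _ _)))) hcseg
  have humem : u ∈ convexHull ℝ _ :=
    (hcv.segment_subset (hsub (by simp)) (hsub (by simp))) huseg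
  exact hcv.segment_subset hcmem humem hPcu


section helpers
variable {k : ℕ} {M : Type*}

lemma sum_if_sub [AddCommGroup M] (t : Fin k → M) {m m' : ℕ} (h : m ≤ m') :
    (∑ l : Fin k, if (l : ℕ) < m' then t l else 0) -
      (∑ l : Fin k, if (l : ℕ) < m then t l else 0) =
    ∑ l : Fin k, if m ≤ (l : ℕ) ∧ (l : ℕ) < m' then t l else 0 := by
  rw [← Finset.sum_sub_distrib]
  refine Finset.sum_congr rfl fun l _ => ?_
  rcases lt_or_ge (l : ℕ) m with h1 | h1
  · rw [if_pos h1, if_pos (lt_of_lt_of_le h1 h), if_neg (by omega), sub_self]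
  · rcases lt_or_ge (l : ℕ) m' with h2 | h2
    · rw [if_pos h2, if_neg (not_lt.2 h1), if_pos ⟨h1, h2⟩, sub_zero]
    · rw [if_neg (not_lt.2 h2), if_neg (not_lt.2 h1),
        if_neg (fun hc => absurd hc.2 (not_lt.2 h2)), sub_self]

lemma sum_if_pos [AddCommGroup M] [LinearOrder M] [IsOrderedAddMonoid M] (t : Fin k → M)
    {m m' : ℕ} (h : m < m') (h' : m' ≤ k)
    (ht : ∀ l : Fin k, m ≤ (l : ℕ) → (l : ℕ) < m' → 0 < t l) :
    0 < ∑ l : Fin k, if m ≤ (l : ℕ) ∧ (l : ℕ) < m' then t l else 0 := by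
  have hm : m < k := lt_of_lt_of_le h h'
  refine Finset.sum_pos' (fun l _ => ?_) ⟨⟨m, hm⟩, Finset.mem_univ _, ?_⟩
  · by_cases hl : m ≤ (l : ℕ) ∧ (l : ℕ) < m'
    · simp only [if_pos hl]; exact (ht l hl.1 hl.2).le
    · simp [hl]
  · simp only [if_pos (show m ≤ ((⟨m, hm⟩ : Fin k) : ℕ) ∧ ((⟨m, hm⟩ : Fin k) : ℕ) < m' from ⟨le_refl m, h⟩)]
    exact ht _ le_rfl h

lemma sum_if_lt [AddCommGroup M] [LinearOrder M] [IsOrderedAddMonoid M] (t : Fin k → M)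
    (ht : ∀ l : Fin k, 0 < t l) {m m' : ℕ} (h : m < m') (h' : m' ≤ k) :
    (∑ l : Fin k, if (l : ℕ) < m then t l else 0) <
      ∑ l : Fin k, if (l : ℕ) < m' then t l else 0 := by
  have := sum_if_pos t h h' (fun l _ _ => ht l)
  have h2 := sum_if_sub t h.le
  rw [← h2] at this
  exact sub_pos.mp this

end helpers

section pts
variable {k : ℕ}

/-- the vertex map: partial sums -/
def ptsP (f : Fin k → ℕ × ℕ) (m : Fin (k + 1)) : ℤ × ℤ :=
  ((∑ l : Fin k, if (l : ℕ) < (m : ℕ) then ((f l).1 : ℤ) else 0),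
   (∑ l : Fin k, if (l : ℕ) < (m : ℕ) then ((f l).2 : ℤ) else 0))

variable {f : Fin k → ℕ × ℕ} (hpos : ∀ l, 0 < (f l).1 ∧ 0 < (f l).2)

lemma ptsP_fst_lt (hpos : ∀ l, 0 < (f l).1 ∧ 0 < (f l).2) {m m' : Fin (k + 1)} (h : m < m') :
    (ptsP f m).1 < (ptsP f m').1 :=
  sum_if_lt _ (fun l => by exact_mod_cast (hpos l).1) h (Nat.lt_succ_iff.1 m'.isLt)

lemma ptsP_snd_lt (hpos : ∀ l, 0 < (f l).1 ∧ 0 < (f l).2) {m m' : Fin (k + 1)} (h : m < m') :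
    (ptsP f m).2 < (ptsP f m').2 :=
  sum_if_lt _ (fun l => by exact_mod_cast (hpos l).2) h (Nat.lt_succ_iff.1 m'.isLt)

lemma ptsP_inj (hpos : ∀ l, 0 < (f l).1 ∧ 0 < (f l).2) : Function.Injective (ptsP f) := by
  intro m m' h
  by_contra hne
  rcases lt_or_gt_of_ne hne with hlt | hlt
  · exact absurd (congrArg Prod.fst h) (ne_of_lt (ptsP_fst_lt hpos hlt))
  · exact absurd (congrArg Prod.fst h).symm (ne_of_lt (ptsP_fst_lt hpos hlt))

lemma ptsP_zero (f : Fin k → ℕ × ℕ) : ptsP f 0 = (0, 0) := by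
  simp [ptsP]

lemma ptsP_last (f : Fin k → ℕ × ℕ) :
    ptsP f (Fin.last k) = (((∑ l, (f l).1 : ℕ) : ℤ), (((∑ l, (f l).2 : ℕ) : ℤ))) := by
  unfold ptsP
  have : ∀ l : Fin k, (l : ℕ) < (Fin.last k : ℕ) := fun l => l.isLt
  push_cast
  refine Prod.ext ?_ ?_ <;>
    · simp only
      exact Finset.sum_congr rfl fun l _ => if_pos (l.isLt : (l : ℕ) < k)

end pts
section slopes
variable {k : ℕ} {f : Fin k → ℕ × ℕ}

lemma cross_of_slope (hpos : ∀ l, 0 < (f l).1 ∧ 0 < (f l).2)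
    (hslope : ∀ l₁ l₂ : Fin k, l₁ < l₂ →
      ((f l₁).2 : ℚ) / ((f l₁).1 : ℚ) < ((f l₂).2 : ℚ) / ((f l₂).1 : ℚ))
    {l₁ l₂ : Fin k} (h : l₁ < l₂) :
    ((f l₁).2 : ℤ) * ((f l₂).1 : ℤ) < ((f l₂).2 : ℤ) * ((f l₁).1 : ℤ) := by
  have h1 : (0 : ℚ) < ((f l₁).1 : ℚ) := by exact_mod_cast (hpos l₁).1
  have h2 : (0 : ℚ) < ((f l₂).1 : ℚ) := by exact_mod_cast (hpos l₂).1
  have := (div_lt_div_iff₀ h1 h2).1 (hslope l₁ l₂ h)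
  exact_mod_cast this

lemma interior_key (hpos : ∀ l, 0 < (f l).1 ∧ 0 < (f l).2)
    (hslope : ∀ l₁ l₂ : Fin k, l₁ < l₂ →
      ((f l₁).2 : ℚ) / ((f l₁).1 : ℚ) < ((f l₂).2 : ℚ) / ((f l₂).1 : ℚ))
    {n : ℕ} (h0 : 0 < n) (hnk : n < k) :
    (∑ l : Fin k, if (l : ℕ) < n then ((f l).2 : ℤ) else 0) *
      (∑ l : Fin k, if n ≤ (l : ℕ) then ((f l).1 : ℤ) else 0) <
    (∑ l : Fin k, if n ≤ (l : ℕ) then ((f l).2 : ℤ) else 0) *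
      (∑ l : Fin k, if (l : ℕ) < n then ((f l).1 : ℤ) else 0) := by
  rw [Finset.sum_mul_sum, Finset.sum_mul_sum]
  rw [Finset.sum_comm (s := Finset.univ) (t := Finset.univ)]
  have hterm : ∀ l l' : Fin k,
      (if (l : ℕ) < n then ((f l).2 : ℤ) else 0) * (if n ≤ (l' : ℕ) then ((f l').1 : ℤ) else 0) ≤
      (if n ≤ (l' : ℕ) then ((f l').2 : ℤ) else 0) * (if (l : ℕ) < n then ((f l).1 : ℤ) else 0) := by
    intro l l'
    by_cases h1 : (l : ℕ) < n
    · by_cases h2 : n ≤ (l' : ℕ)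
      · rw [if_pos h1, if_pos h2, if_pos h2, if_pos h1]
        exact (cross_of_slope hpos hslope (show l < l' by rw [Fin.lt_def]; omega)).le
      · rw [if_neg h2, if_neg h2, mul_zero, zero_mul]
    · rw [if_neg h1, if_neg h1, zero_mul, mul_zero]
  refine Finset.sum_lt_sum (fun l _ => Finset.sum_le_sum fun l' _ => hterm l' l)
    ⟨⟨n, hnk⟩, Finset.mem_univ _, ?_⟩
  refine Finset.sum_lt_sum (fun l' _ => hterm l' _) ⟨⟨0, h0.trans hnk⟩, Finset.mem_univ _, ?_⟩
  rw [if_pos (show ((⟨0, h0.trans hnk⟩ : Fin k) : ℕ) < n from h0),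
    if_pos (show n ≤ ((⟨n, hnk⟩ : Fin k) : ℕ) from le_rfl),
    if_pos (show n ≤ ((⟨n, hnk⟩ : Fin k) : ℕ) from le_rfl),
    if_pos (show ((⟨0, h0.trans hnk⟩ : Fin k) : ℕ) < n from h0)]
  exact cross_of_slope hpos hslope (show (⟨0, h0.trans hnk⟩ : Fin k) < ⟨n, hnk⟩ by
    rw [Fin.lt_def]; exact h0)

end slopes
section convpos
variable {k : ℕ}

/-- linear functional partial sums -/
def funcF (f : Fin k → ℕ × ℕ) (s : ℝ) (t : ℕ) : ℝ :=
  ∑ l : Fin k, if (l : ℕ) < t then (((f l).2 : ℝ) - s * ((f l).1 : ℝ)) else 0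

variable {f : Fin k → ℕ × ℕ}

lemma convpos_aux (hk : 1 ≤ k) (hpos : ∀ l, 0 < (f l).1 ∧ 0 < (f l).2)
    (hslope : ∀ l₁ l₂ : Fin k, l₁ < l₂ →
      ((f l₁).2 : ℚ) / ((f l₁).1 : ℚ) < ((f l₂).2 : ℚ) / ((f l₂).1 : ℚ))
    (m : Fin (k + 1)) :
    ¬ ((((ptsP f m).1 : ℝ), ((ptsP f m).2 : ℝ)) ∈ convexHull ℝ
      ((fun p : ℤ × ℤ => ((p.1 : ℝ), (p.2 : ℝ))) ''
        (((Finset.image (ptsP f) Finset.univ).erase (ptsP f m) : Finset (ℤ × ℤ)) : Set (ℤ × ℤ)))) := by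
  intro hmem
  set sR : Fin k → ℝ := fun l => ((f l).2 : ℝ) / ((f l).1 : ℝ) with hsR
  have hxpos : ∀ l : Fin k, (0 : ℝ) < ((f l).1 : ℝ) := fun l => by exact_mod_cast (hpos l).1
  have hsRmono : ∀ l₁ l₂ : Fin k, l₁ < l₂ → sR l₁ < sR l₂ := by
    intro l₁ l₂ h
    rw [hsR]
    simp only
    rw [div_lt_div_iff₀ (hxpos l₁) (hxpos l₂)]
    exact_mod_cast cross_of_slope hpos hslope h
  have hsRle : ∀ l₁ l₂ : Fin k, l₁ ≤ l₂ → sR l₁ ≤ sR l₂ := by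
    intro l₁ l₂ h
    rcases eq_or_lt_of_le h with h | h
    · rw [h]
    · exact (hsRmono _ _ h).le
  obtain ⟨s, hlt, hgt⟩ : ∃ s : ℝ, (∀ l : Fin k, (l : ℕ) < (m : ℕ) → sR l < s) ∧
      (∀ l : Fin k, (m : ℕ) ≤ (l : ℕ) → s < sR l) := by
    rcases Nat.eq_zero_or_pos (m : ℕ) with h0 | h0
    · refine ⟨sR ⟨0, hk⟩ - 1, fun l hl => absurd hl (by omega), fun l _ => ?_⟩
      have := hsRle ⟨0, hk⟩ l (by rw [Fin.le_def]; exact Nat.zero_le _)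
      linarith
    · rcases eq_or_lt_of_le (Nat.lt_succ_iff.1 m.isLt) with hmk | hmk
      · refine ⟨sR ⟨k - 1, by omega⟩ + 1, fun l _ => ?_, fun l hl => absurd l.isLt (by omega)⟩
        have := hsRle l ⟨k - 1, by omega⟩
          (by rw [Fin.le_def]; exact Nat.le_pred_of_lt l.isLt)
        linarith
      · refine ⟨(sR ⟨(m : ℕ) - 1, by omega⟩ + sR ⟨(m : ℕ), hmk⟩) / 2,
          fun l hl => ?_, fun l hl => ?_⟩
        · have h1 := hsRle l ⟨(m : ℕ) - 1, by omega⟩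
            (by rw [Fin.le_def]; exact Nat.le_pred_of_lt hl)
          have h2 := hsRmono ⟨(m : ℕ) - 1, by omega⟩ ⟨(m : ℕ), hmk⟩
            (by rw [Fin.lt_def]; simp only [Fin.val_mk]; omega)
          linarith
        · have h1 := hsRle ⟨(m : ℕ), hmk⟩ l (by rw [Fin.le_def]; exact hl)
          have h2 := hsRmono ⟨(m : ℕ) - 1, by omega⟩ ⟨(m : ℕ), hmk⟩
            (by rw [Fin.lt_def]; simp only [Fin.val_mk]; omega)
          linarith
  have hFval : ∀ m' : Fin (k + 1),
      ((ptsP f m').2 : ℝ) - s * ((ptsP f m').1 : ℝ) = funcF f s (m' : ℕ) := by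
    intro m'
    show ((_ : ℤ) : ℝ) - s * ((_ : ℤ) : ℝ) = _
    push_cast [ptsP]
    unfold funcF
    rw [Finset.mul_sum, ← Finset.sum_sub_distrib]
    refine Finset.sum_congr rfl fun l _ => ?_
    split_ifs with h
    · ring
    · ring
  have hFm : ∀ m' : Fin (k + 1), m' ≠ m → funcF f s (m : ℕ) < funcF f s (m' : ℕ) := by
    intro m' hne
    have hne' : (m' : ℕ) ≠ (m : ℕ) := fun h => hne (Fin.ext h)
    rcases lt_or_gt_of_ne hne' with hc | hc
    · have hpos' := sum_if_pos (fun l : Fin k => s * ((f l).1 : ℝ) - ((f l).2 : ℝ))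
        hc (Nat.lt_succ_iff.1 m.isLt)
        (fun l _ hl2 => by
          show (0 : ℝ) < s * ((f l).1 : ℝ) - ((f l).2 : ℝ)
          have hs := hlt l hl2
          have hx := hxpos l
          have hy : ((f l).2 : ℝ) = sR l * ((f l).1 : ℝ) := by
            rw [hsR]; simp only; rw [div_mul_cancel₀ _ (hxpos l).ne']
          nlinarith)
      have hsub := sum_if_sub (fun l : Fin k => s * ((f l).1 : ℝ) - ((f l).2 : ℝ))
        hc.le (m' := (m : ℕ))
      have hneg : ∀ t : ℕ, (∑ l : Fin k,
          if (l : ℕ) < t then (s * ((f l).1 : ℝ) - ((f l).2 : ℝ)) else 0) = - funcF f s t := by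
        intro t
        unfold funcF
        rw [← Finset.sum_neg_distrib]
        refine Finset.sum_congr rfl fun l _ => ?_
        split_ifs with h
        · ring
        · ring
      rw [hneg, hneg] at hsub
      rw [← hsub] at hpos'
      linarith
    · have hpos' := sum_if_pos (fun l : Fin k => ((f l).2 : ℝ) - s * ((f l).1 : ℝ))
        hc (Nat.lt_succ_iff.1 m'.isLt)
        (fun l hl1 _ => by
          show (0 : ℝ) < ((f l).2 : ℝ) - s * ((f l).1 : ℝ)
          have hs := hgt l hl1
          have hx := hxpos l
          have hy : ((f l).2 : ℝ) = sR l * ((f l).1 : ℝ) := by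
            rw [hsR]; simp only; rw [div_mul_cancel₀ _ (hxpos l).ne']
          nlinarith)
      have hsub := sum_if_sub (fun l : Fin k => ((f l).2 : ℝ) - s * ((f l).1 : ℝ))
        hc.le (m' := (m' : ℕ))
      rw [← hsub] at hpos'
      unfold funcF
      linarith
  have hlin : IsLinearMap ℝ (fun p : ℝ × ℝ => p.2 - s * p.1) := by
    constructor
    · intro p q; simp [Prod.fst_add, Prod.snd_add]; ring
    · intro c p; simp [Prod.smul_fst, Prod.smul_snd, smul_eq_mul]; ring
  have hconv : Convex ℝ {p : ℝ × ℝ | funcF f s (m : ℕ) < p.2 - s * p.1} :=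
    convex_halfSpace_gt hlin _
  have hsubH : ((fun p : ℤ × ℤ => ((p.1 : ℝ), (p.2 : ℝ))) ''
        (((Finset.image (ptsP f) Finset.univ).erase (ptsP f m) : Finset (ℤ × ℤ)) : Set (ℤ × ℤ)))
      ⊆ {p : ℝ × ℝ | funcF f s (m : ℕ) < p.2 - s * p.1} := by
    rintro _ ⟨q, hq, rfl⟩
    rw [Finset.mem_coe, Finset.mem_erase] at hq
    obtain ⟨hneq, hqmem⟩ := hq
    obtain ⟨m', _, rfl⟩ := Finset.mem_image.1 hqmem
    have hm'ne : m' ≠ m := fun h => hneq (by rw [h])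
    show funcF f s (m : ℕ) < ((ptsP f m').2 : ℝ) - s * ((ptsP f m').1 : ℝ)
    rw [hFval m']
    exact hFm m' hm'ne
  have := convexHull_min hsubH hconv hmem
  rw [Set.mem_setOf_eq] at this
  rw [hFval m] at this
  exact lt_irrefl _ this

end convpos
section more
variable {k : ℕ} {M : Type*}

lemma sum_split [AddCommMonoid M] (t : Fin k → M) (n : ℕ) :
    ∑ l, t l = (∑ l : Fin k, if (l : ℕ) < n then t l else 0) +
      (∑ l : Fin k, if n ≤ (l : ℕ) then t l else 0) := by
  rw [← Finset.sum_add_distrib]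
  refine Finset.sum_congr rfl fun l _ => ?_
  rcases lt_or_ge (l : ℕ) n with h | h
  · rw [if_pos h, if_neg (by omega), add_zero]
  · rw [if_neg (by omega), if_pos h, zero_add]

lemma sum_if_single [AddCommMonoid M] (t : Fin k → M) (l : Fin k) :
    (∑ l' : Fin k, if (l : ℕ) ≤ (l' : ℕ) ∧ (l' : ℕ) < (l : ℕ) + 1 then t l' else 0) = t l := by
  rw [Finset.sum_eq_single l]
  · rw [if_pos ⟨le_rfl, Nat.lt_succ_self _⟩]
  · intro b _ hb
    exact if_neg (fun hc => hb (Fin.ext (by omega)))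
  · intro h; exact absurd (Finset.mem_univ l) h

lemma ptsP_succ_sub (f : Fin k → ℕ × ℕ) (l : Fin k) :
    ptsP f l.succ - ptsP f l.castSucc = (((f l).1 : ℤ), ((f l).2 : ℤ)) := by
  have h1 : ((l.castSucc : Fin (k+1)) : ℕ) = (l : ℕ) := rfl
  have h2 : ((l.succ : Fin (k+1)) : ℕ) = (l : ℕ) + 1 := rfl
  unfold ptsP
  rw [Prod.mk_sub_mk]
  rw [h1, h2]
  refine Prod.ext ?_ ?_ <;> simp only <;>
    rw [sum_if_sub _ (Nat.le_succ _), sum_if_single]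

end more
section mapsto
variable {i j k : ℕ} {f : Fin k → ℕ × ℕ}

lemma mapsto_aux (hi : 0 < i) (hj : 0 < j) (hk : 1 ≤ k)
    (hpos : ∀ l, 0 < (f l).1 ∧ 0 < (f l).2)
    (hsx : ∑ l, (f l).1 = i) (hsy : ∑ l, (f l).2 = j)
    (hslope : ∀ l₁ l₂ : Fin k, l₁ < l₂ →
      ((f l₁).2 : ℚ) / ((f l₁).1 : ℚ) < ((f l₂).2 : ℚ) / ((f l₂).1 : ℚ)) :
    (Finset.image (ptsP f) Finset.univ).card = k + 1 ∧
    ((0, 0) : ℤ × ℤ) ∈ Finset.image (ptsP f) Finset.univ ∧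
    ((i : ℤ), (j : ℤ)) ∈ Finset.image (ptsP f) Finset.univ ∧
    (∀ v ∈ Finset.image (ptsP f) Finset.univ,
      ¬ (((v.1 : ℝ), (v.2 : ℝ)) ∈ convexHull ℝ
        ((fun p : ℤ × ℤ => ((p.1 : ℝ), (p.2 : ℝ))) ''
          (((Finset.image (ptsP f) Finset.univ).erase v : Finset (ℤ × ℤ)) : Set (ℤ × ℤ))))) ∧
    (∀ v ∈ Finset.image (ptsP f) Finset.univ, v ≠ ((0, 0) : ℤ × ℤ) →
      v ≠ ((i : ℤ), (j : ℤ)) →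
      0 < v.2 ∧ v.1 < (i : ℤ) ∧ (i : ℤ) * v.2 < (j : ℤ) * v.1) := by
  have hlast : ptsP f (Fin.last k) = ((i : ℤ), (j : ℤ)) := by
    rw [ptsP_last, hsx, hsy]
  refine ⟨?_, ?_, ?_, ?_, ?_⟩
  · rw [Finset.card_image_of_injective _ (ptsP_inj hpos), Finset.card_univ, Fintype.card_fin]
  · exact Finset.mem_image.2 ⟨0, Finset.mem_univ _, ptsP_zero f⟩
  · exact Finset.mem_image.2 ⟨Fin.last k, Finset.mem_univ _, hlast⟩
  · intro v hv
    obtain ⟨m, _, rfl⟩ := Finset.mem_image.1 hv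
    exact convpos_aux hk hpos hslope m
  · intro v hv hv0 hvij
    obtain ⟨m, _, rfl⟩ := Finset.mem_image.1 hv
    have hm0 : 0 < (m : ℕ) := by
      rcases Nat.eq_zero_or_pos (m : ℕ) with h | h
      · exact absurd (by rw [show m = 0 from Fin.ext h]; exact ptsP_zero f) hv0
      · exact h
    have hmk : (m : ℕ) < k := by
      rcases eq_or_lt_of_le (Nat.lt_succ_iff.1 m.isLt) with h | h
      · exact absurd (by rw [show m = Fin.last k from Fin.ext h]; exact hlast) hvij
      · exact h
    have h0m : (0 : Fin (k + 1)) < m := by rw [Fin.lt_def]; exact hm0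
    have hmlast : m < Fin.last k := by rw [Fin.lt_def]; exact hmk
    refine ⟨?_, ?_, ?_⟩
    · have := ptsP_snd_lt hpos h0m
      rwa [ptsP_zero f] at this
    · have := ptsP_fst_lt hpos hmlast
      rwa [hlast] at this
    · have key := interior_key hpos hslope hm0 hmk
      have hix : (i : ℤ) = (∑ l : Fin k, if (l : ℕ) < (m : ℕ) then ((f l).1 : ℤ) else 0) +
          ∑ l : Fin k, if (m : ℕ) ≤ (l : ℕ) then ((f l).1 : ℤ) else 0 := by
        rw [← sum_split]
        exact_mod_cast congrArg (fun t : ℕ => (t : ℤ)) hsx.symm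
      have hjy : (j : ℤ) = (∑ l : Fin k, if (l : ℕ) < (m : ℕ) then ((f l).2 : ℤ) else 0) +
          ∑ l : Fin k, if (m : ℕ) ≤ (l : ℕ) then ((f l).2 : ℤ) else 0 := by
        rw [← sum_split]
        exact_mod_cast congrArg (fun t : ℕ => (t : ℤ)) hsy.symm
      show (i : ℤ) * (ptsP f m).2 < (j : ℤ) * (ptsP f m).1
      unfold ptsP
      simp only
      rw [hix, hjy]
      nlinarith [key]

lemma inj_aux (hpos : ∀ l, 0 < (f l).1 ∧ 0 < (f l).2) {g : Fin k → ℕ × ℕ}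
    (hgpos : ∀ l, 0 < (g l).1 ∧ 0 < (g l).2)
    (hV : Finset.image (ptsP f) Finset.univ = Finset.image (ptsP g) Finset.univ) : f = g := by
  have hXf : StrictMono fun m : Fin (k + 1) => (ptsP f m).1 := fun a b h => ptsP_fst_lt hpos h
  have hXg : StrictMono fun m : Fin (k + 1) => (ptsP g m).1 := fun a b h => ptsP_fst_lt hgpos h
  set S : Finset ℤ := Finset.image Prod.fst (Finset.image (ptsP f) Finset.univ) with hS
  have hSg : S = Finset.image Prod.fst (Finset.image (ptsP g) Finset.univ) := by rw [hS, hV]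
  have hScard : S.card = k + 1 := by
    rw [hS, Finset.image_image, Finset.card_image_of_injective _
      (show Function.Injective (Prod.fst ∘ ptsP f) from fun a b h => hXf.injective h),
      Finset.card_univ, Fintype.card_fin]
  have hmemf : ∀ m : Fin (k + 1), (ptsP f m).1 ∈ S := fun m =>
    Finset.mem_image.2 ⟨ptsP f m, Finset.mem_image_of_mem _ (Finset.mem_univ m), rfl⟩
  have hmemg : ∀ m : Fin (k + 1), (ptsP g m).1 ∈ S := fun m => by
    rw [hSg]
    exact Finset.mem_image.2 ⟨ptsP g m, Finset.mem_image_of_mem _ (Finset.mem_univ m), rfl⟩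
  have hXfg : (fun m : Fin (k + 1) => (ptsP f m).1) = fun m => (ptsP g m).1 := by
    rw [Finset.orderEmbOfFin_unique hScard hmemf hXf,
      Finset.orderEmbOfFin_unique hScard hmemg hXg]
  have hP : ∀ m : Fin (k + 1), ptsP f m = ptsP g m := by
    intro m
    have : ptsP f m ∈ Finset.image (ptsP g) Finset.univ := by
      rw [← hV]; exact Finset.mem_image_of_mem _ (Finset.mem_univ m)
    obtain ⟨m', _, hm'⟩ := Finset.mem_image.1 this
    have h1 : (ptsP g m').1 = (ptsP g m).1 := by
      rw [hm']
      exact congrFun hXfg m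
    have : m' = m := hXg.injective h1
    rw [← hm', this]
  have hd : ∀ l : Fin k, (((f l).1 : ℤ), ((f l).2 : ℤ)) = (((g l).1 : ℤ), ((g l).2 : ℤ)) := by
    intro l
    rw [← ptsP_succ_sub f l, ← ptsP_succ_sub g l, hP, hP]
  funext l
  have := hd l
  rw [Prod.mk.injEq] at this
  exact Prod.ext (by exact_mod_cast this.1) (by exact_mod_cast this.2)

end mapsto
section surj
variable {i j k : ℕ} {V : Finset (ℤ × ℤ)}

/-- interior vertices have positive first coordinate -/
lemma int_fst_pos {j v2 v1 : ℤ} (hj : 0 < j) (h2 : 0 < v2) {i : ℤ} (hi : 0 < i)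
    (hL : i * v2 < j * v1) : 0 < v1 := by nlinarith

lemma fst_injOn (hi : 0 < i) (hj : 0 < j)
    (h00 : ((0, 0) : ℤ × ℤ) ∈ V) (hij : ((i : ℤ), (j : ℤ)) ∈ V)
    (hconv : ∀ v ∈ V, ¬ (((v.1 : ℝ), (v.2 : ℝ)) ∈ convexHull ℝ
      ((fun p : ℤ × ℤ => ((p.1 : ℝ), (p.2 : ℝ))) '' ((V.erase v : Finset (ℤ × ℤ)) : Set (ℤ × ℤ)))))
    (hint : ∀ v ∈ V, v ≠ ((0, 0) : ℤ × ℤ) → v ≠ ((i : ℤ), (j : ℤ)) →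
      0 < v.2 ∧ v.1 < (i : ℤ) ∧ (i : ℤ) * v.2 < (j : ℤ) * v.1) :
    ∀ v ∈ V, ∀ w ∈ V, v.1 = w.1 → v = w := by
  have hi' : (0 : ℤ) < (i : ℤ) := by exact_mod_cast hi
  have hj' : (0 : ℤ) < (j : ℤ) := by exact_mod_cast hj
  have core : ∀ v ∈ V, ∀ w ∈ V, v.1 = w.1 → v.2 < w.2 → False := by
    intro v hv w hw hfst hlt
    have hwne0 : w ≠ ((0, 0) : ℤ × ℤ) := by
      rintro rfl
      have hvne0 : v ≠ ((0, 0) : ℤ × ℤ) := fun h => by rw [h] at hlt; exact lt_irrefl _ hlt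
      have hvneij : v ≠ ((i : ℤ), (j : ℤ)) := fun h => by
        rw [h] at hfst; exact absurd hfst (by simpa using hi'.ne')
      have := (hint v hv hvne0 hvneij).1
      exact absurd this (by omega)
    have hwneij : w ≠ ((i : ℤ), (j : ℤ)) := by
      rintro rfl
      have hvneij : v ≠ ((i : ℤ), (j : ℤ)) := fun h => by rw [h] at hlt; exact lt_irrefl _ hlt
      have hvne0 : v ≠ ((0, 0) : ℤ × ℤ) := fun h => by
        rw [h] at hfst; exact absurd hfst.symm (by simpa using hi'.ne')
      have := (hint v hv hvne0 hvneij).2.1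
      omega
    obtain ⟨hw2, hw1, hwL⟩ := hint w hw hwne0 hwneij
    have hw1pos : (0 : ℤ) < w.1 := int_fst_pos hj' hw2 hi' hwL
    have hvne0 : v ≠ ((0, 0) : ℤ × ℤ) := by
      rintro rfl
      simp only [Prod.fst] at hfst
      omega
    have hvneij : v ≠ ((i : ℤ), (j : ℤ)) := fun h => by
      rw [h] at hfst; simp only at hfst; omega
    have hvw : v ≠ w := fun h => by rw [h] at hlt; exact lt_irrefl _ hlt
    have hm := hull_quad i j hi v ((i : ℤ), (j : ℤ)) w
      (by omega) (le_of_eq hfst) hw1.le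
      (by nlinarith [hfst]) hwL.le hw1pos.le hw1.le
    have hsub : ({((v.1 : ℝ), (v.2 : ℝ)), (((i : ℤ) : ℝ), ((j : ℤ) : ℝ)), ((0 : ℝ), (0 : ℝ)),
        ((i : ℝ), (j : ℝ))} : Set (ℝ × ℝ)) ⊆
        (fun p : ℤ × ℤ => ((p.1 : ℝ), (p.2 : ℝ))) '' ((V.erase w : Finset (ℤ × ℤ)) : Set (ℤ × ℤ)) := by
      intro p hp
      rcases hp with h | h | h | h
      · exact ⟨v, Finset.mem_coe.2 (Finset.mem_erase.2 ⟨hvw, hv⟩), h ▸ rfl⟩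
      · exact ⟨((i : ℤ), (j : ℤ)), Finset.mem_coe.2 (Finset.mem_erase.2 ⟨fun h' => hwneij h'.symm, hij⟩),
          h ▸ rfl⟩
      · refine ⟨((0, 0) : ℤ × ℤ), Finset.mem_coe.2 (Finset.mem_erase.2 ⟨fun h' => hwne0 h'.symm, h00⟩), ?_⟩
        rw [h]; norm_num
      · rw [Set.mem_singleton_iff] at h
        refine ⟨((i : ℤ), (j : ℤ)), Finset.mem_coe.2 (Finset.mem_erase.2 ⟨fun h' => hwneij h'.symm, hij⟩), ?_⟩
        rw [h]
        norm_num
    have hmm : (((i : ℤ) : ℝ), ((j : ℤ) : ℝ)) = ((i : ℝ), (j : ℝ)) := by push_cast; rfl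
    exact hconv w hw (convexHull_mono hsub hm)
  intro v hv w hw h
  rcases lt_trichotomy v.2 w.2 with hc | hc | hc
  · exact absurd (core v hv w hw h hc) (fun a => a)
  · exact Prod.ext h hc
  · exact absurd (core w hw v hv h.symm hc) (fun a => a)

end surj
section surj2
variable {i j k : ℕ} {V : Finset (ℤ × ℤ)}

set_option maxHeartbeats 2000000 in
lemma surj_aux (hi : 0 < i) (hj : 0 < j) (hk : 1 ≤ k)
    (hcard : V.card = k + 1)
    (h00 : ((0, 0) : ℤ × ℤ) ∈ V) (hij : ((i : ℤ), (j : ℤ)) ∈ V)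
    (hconv : ∀ v ∈ V, ¬ (((v.1 : ℝ), (v.2 : ℝ)) ∈ convexHull ℝ
      ((fun p : ℤ × ℤ => ((p.1 : ℝ), (p.2 : ℝ))) '' ((V.erase v : Finset (ℤ × ℤ)) : Set (ℤ × ℤ)))))
    (hint : ∀ v ∈ V, v ≠ ((0, 0) : ℤ × ℤ) → v ≠ ((i : ℤ), (j : ℤ)) →
      0 < v.2 ∧ v.1 < (i : ℤ) ∧ (i : ℤ) * v.2 < (j : ℤ) * v.1) :
    ∃ f : Fin k → ℕ × ℕ, ((∀ l, 0 < (f l).1 ∧ 0 < (f l).2) ∧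
      (∑ l, (f l).1 = i) ∧ (∑ l, (f l).2 = j) ∧
      ∀ l₁ l₂ : Fin k, l₁ < l₂ →
        ((f l₁).2 : ℚ) / ((f l₁).1 : ℚ) < ((f l₂).2 : ℚ) / ((f l₂).1 : ℚ)) ∧
      Finset.image (ptsP f) Finset.univ = V := by
  have hi' : (0 : ℤ) < (i : ℤ) := by exact_mod_cast hi
  have hj' : (0 : ℤ) < (j : ℤ) := by exact_mod_cast hj
  have hfi := fst_injOn hi hj h00 hij hconv hint
  -- bounds on first coordinates
  have hbound : ∀ v ∈ V, (0 : ℤ) ≤ v.1 ∧ v.1 ≤ (i : ℤ) := by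
    intro v hv
    by_cases hv0 : v = ((0, 0) : ℤ × ℤ)
    · rw [hv0]; constructor <;> simp [hi'.le]
    by_cases hvij : v = ((i : ℤ), (j : ℤ))
    · rw [hvij]; exact ⟨hi'.le, le_rfl⟩
    obtain ⟨h1, h2, h3⟩ := hint v hv hv0 hvij
    exact ⟨(int_fst_pos hj' h1 hi' h3).le, h2.le⟩
  have hWcard : (V.image Prod.fst).card = k + 1 := by
    rw [Finset.card_image_of_injOn (fun v hv w hw h => hfi v hv w hw h), hcard]
  set e := (V.image Prod.fst).orderEmbOfFin hWcard with he
  have hexu : ∀ m : Fin (k + 1), ∃! v, v ∈ V ∧ v.1 = e m := by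
    intro m
    obtain ⟨v, hv, hve⟩ := Finset.mem_image.1 (Finset.orderEmbOfFin_mem _ hWcard m)
    exact ⟨v, ⟨hv, hve⟩, fun w hw => hfi w hw.1 v hv (hw.2.trans hve.symm)⟩
  set Q : Fin (k + 1) → ℤ × ℤ := fun m => Finset.choose (fun v => v.1 = e m) V (hexu m) with hQdef
  have hQmem : ∀ m, Q m ∈ V := fun m => Finset.choose_mem (fun v => v.1 = e m) V (hexu m)
  have hQfst : ∀ m, (Q m).1 = e m := fun m => Finset.choose_property (fun v => v.1 = e m) V (hexu m)
  have hQuniq : ∀ (m) (v), v ∈ V → v.1 = e m → v = Q m := fun m v hv hve =>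
    hfi v hv (Q m) (hQmem m) (by rw [hve, hQfst])
  have hQmono : ∀ m m' : Fin (k + 1), m < m' → (Q m).1 < (Q m').1 := by
    intro m m' h
    rw [hQfst, hQfst]
    exact e.strictMono h
  have hQ0 : Q 0 = ((0, 0) : ℤ × ℤ) := by
    refine (hQuniq 0 ((0, 0) : ℤ × ℤ) h00 ?_).symm
    have h0W : (0 : ℤ) ∈ V.image Prod.fst := Finset.mem_image_of_mem _ h00
    have : e ⟨0, Nat.succ_pos k⟩ = (V.image Prod.fst).min'
        (Finset.card_pos.1 (by rw [hWcard]; omega)) :=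
      Finset.orderEmbOfFin_zero hWcard (Nat.succ_pos k)
    have hmin : (V.image Prod.fst).min' (Finset.card_pos.1 (by rw [hWcard]; omega)) = 0 := by
      refine le_antisymm (Finset.min'_le _ 0 h0W) (Finset.le_min' _ _ _ fun y hy => ?_)
      obtain ⟨v, hv, rfl⟩ := Finset.mem_image.1 hy
      exact (hbound v hv).1
    show (0 : ℤ) = e 0
    rw [show (0 : Fin (k + 1)) = ⟨0, Nat.succ_pos k⟩ from rfl, this, hmin]
  have hQlast : Q (Fin.last k) = ((i : ℤ), (j : ℤ)) := by
    refine (hQuniq (Fin.last k) _ hij ?_).symm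
    have hiW : (i : ℤ) ∈ V.image Prod.fst := Finset.mem_image_of_mem _ hij
    have : e ⟨k + 1 - 1, Nat.sub_lt (Nat.succ_pos k) Nat.one_pos⟩ = (V.image Prod.fst).max'
        (Finset.card_pos.1 (by rw [hWcard]; omega)) :=
      Finset.orderEmbOfFin_last hWcard (Nat.succ_pos k)
    have hmax : (V.image Prod.fst).max' (Finset.card_pos.1 (by rw [hWcard]; omega)) = (i : ℤ) := by
      refine le_antisymm (Finset.max'_le _ _ _ fun y hy => ?_) (Finset.le_max' _ _ hiW)
      obtain ⟨v, hv, rfl⟩ := Finset.mem_image.1 hy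
      exact (hbound v hv).2
    show ((i : ℤ), (j : ℤ)).1 = e (Fin.last k)
    rw [show Fin.last k = ⟨k + 1 - 1, Nat.sub_lt (Nat.succ_pos k) Nat.one_pos⟩ from rfl, this, hmax]
  -- package as a ℕ-indexed family
  set QQ : ℕ → ℤ × ℤ := fun n => Q ⟨min n k, by omega⟩ with hQQdef
  have hQQeq : ∀ m : Fin (k + 1), QQ (m : ℕ) = Q m := by
    intro m
    rw [hQQdef]
    simp only
    congr 1
    exact Fin.ext (by simp [Nat.min_eq_left (Nat.lt_succ_iff.1 m.isLt)])
  have hQQ0 : QQ 0 = ((0, 0) : ℤ × ℤ) := by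
    have := hQQeq 0
    simpa using this.trans hQ0
  have hQQk : QQ k = ((i : ℤ), (j : ℤ)) := by
    have := hQQeq (Fin.last k)
    simpa using this.trans hQlast
  have hQQmem : ∀ n, QQ n ∈ V := fun n => hQmem _
  have hQQmono : ∀ n, n < k → (QQ n).1 < (QQ (n + 1)).1 := by
    intro n hn
    rw [hQQdef]
    exact hQmono _ _ (by rw [Fin.lt_def]; simp only [Fin.val_mk]; omega)
  have hQQint : ∀ n, 0 < n → n < k → 0 < (QQ n).2 ∧ (QQ n).1 < (i : ℤ) ∧
      (i : ℤ) * (QQ n).2 < (j : ℤ) * (QQ n).1 := by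
    intro n h1 h2
    refine hint (QQ n) (hQQmem n) ?_ ?_
    · intro h
      have : (QQ n).1 = (QQ 0).1 := by rw [h, hQQ0]
      have hm := hQQmono 0 (by omega)
      have : ∀ a b, a < b → b ≤ k → (QQ a).1 < (QQ b).1 := by
        intro a b hab hbk
        rw [hQQdef]
        exact hQmono _ _ (by rw [Fin.lt_def]; simp only [Fin.val_mk]; omega)
      have h2' := this 0 n h1 h2.le
      omega
    · intro h
      have hlt : ∀ a b, a < b → b ≤ k → (QQ a).1 < (QQ b).1 := by
        intro a b hab hbk
        rw [hQQdef]
        exact hQmono _ _ (by rw [Fin.lt_def]; simp only [Fin.val_mk]; omega)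
      have h2' := hlt n k h2 le_rfl
      rw [h, hQQk] at h2'
      omega
  have hQQlt : ∀ a b, a < b → b ≤ k → (QQ a).1 < (QQ b).1 := by
    intro a b hab hbk
    rw [hQQdef]
    exact hQmono _ _ (by rw [Fin.lt_def]; simp only [Fin.val_mk]; omega)
  -- strict convexity of consecutive slopes
  have hcrossQ : ∀ n, n + 2 ≤ k →
      ((QQ (n + 1)).2 - (QQ n).2) * ((QQ (n + 2)).1 - (QQ (n + 1)).1) <
      ((QQ (n + 2)).2 - (QQ (n + 1)).2) * ((QQ (n + 1)).1 - (QQ n).1) := by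
    intro n hn
    by_contra hcon
    push_neg at hcon
    obtain ⟨hv2, hv1, hvL⟩ := hQQint (n + 1) (by omega) (by omega)
    have hv1pos : (0 : ℤ) < (QQ (n + 1)).1 := int_fst_pos hj' hv2 hi' hvL
    have h01 := hQQlt n (n + 1) (by omega) (by omega)
    have h12 := hQQlt (n + 1) (n + 2) (by omega) (by omega)
    have hm := hull_quad i j hi (QQ n) (QQ (n + 2)) (QQ (n + 1))
      (by omega) h01.le h12.le (by nlinarith) hvL.le hv1pos.le hv1.le
    have hne0 : ((0, 0) : ℤ × ℤ) ≠ QQ (n + 1) := fun h => by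
      rw [← h] at hv2; simp at hv2
    have hneij : ((i : ℤ), (j : ℤ)) ≠ QQ (n + 1) := fun h => by
      rw [← h] at hv1; simp at hv1
    have hneA : QQ n ≠ QQ (n + 1) := fun h => by rw [h] at h01; omega
    have hneB : QQ (n + 2) ≠ QQ (n + 1) := fun h => by rw [h] at h12; omega
    have hsub : ({(((QQ n).1 : ℝ), ((QQ n).2 : ℝ)), (((QQ (n + 2)).1 : ℝ), ((QQ (n + 2)).2 : ℝ)),
        ((0 : ℝ), (0 : ℝ)), ((i : ℝ), (j : ℝ))} : Set (ℝ × ℝ)) ⊆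
        (fun p : ℤ × ℤ => ((p.1 : ℝ), (p.2 : ℝ))) ''
          ((V.erase (QQ (n + 1)) : Finset (ℤ × ℤ)) : Set (ℤ × ℤ)) := by
      intro p hp
      rcases hp with h | h | h | h
      · exact ⟨QQ n, Finset.mem_coe.2 (Finset.mem_erase.2 ⟨hneA, hQQmem n⟩), h ▸ rfl⟩
      · exact ⟨QQ (n + 2), Finset.mem_coe.2 (Finset.mem_erase.2 ⟨hneB, hQQmem _⟩), h ▸ rfl⟩
      · refine ⟨((0, 0) : ℤ × ℤ), Finset.mem_coe.2 (Finset.mem_erase.2 ⟨hne0, h00⟩), ?_⟩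
        rw [h]; norm_num
      · rw [Set.mem_singleton_iff] at h
        refine ⟨((i : ℤ), (j : ℤ)), Finset.mem_coe.2 (Finset.mem_erase.2 ⟨hneij, hij⟩), ?_⟩
        rw [h]; norm_num
    exact hconv (QQ (n + 1)) (hQQmem _) (convexHull_mono hsub hm)
  -- second coordinates increase
  have hdy : ∀ n, n + 1 ≤ k → (QQ n).2 < (QQ (n + 1)).2 := by
    intro n
    induction n with
    | zero =>
      intro h1
      rw [hQQ0]
      simp only
      rcases eq_or_lt_of_le h1 with h | h
      · rw [show (0 : ℕ) + 1 = k from h.symm ▸ rfl, hQQk]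
        exact hj'
      · exact (hQQint 1 Nat.one_pos h).1
    | succ n ih =>
      intro h1
      have hprev := ih (by omega)
      have hcr := hcrossQ n (by omega)
      have h01 := hQQlt n (n + 1) (by omega) (by omega)
      have h12 := hQQlt (n + 1) (n + 2) (by omega) (by omega)
      nlinarith [hcr, hprev, h01, h12]
  -- construct f
  set f : Fin k → ℕ × ℕ := fun l =>
    (((QQ ((l : ℕ) + 1)).1 - (QQ (l : ℕ)).1).toNat,
     ((QQ ((l : ℕ) + 1)).2 - (QQ (l : ℕ)).2).toNat) with hfdef
  have hfx : ∀ l : Fin k, ((f l).1 : ℤ) = (QQ ((l : ℕ) + 1)).1 - (QQ (l : ℕ)).1 := by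
    intro l
    rw [hfdef]
    exact Int.toNat_of_nonneg (by linarith [hQQlt (l : ℕ) ((l : ℕ) + 1) (by omega) (by omega : (l : ℕ) + 1 ≤ k)])
  have hfy : ∀ l : Fin k, ((f l).2 : ℤ) = (QQ ((l : ℕ) + 1)).2 - (QQ (l : ℕ)).2 := by
    intro l
    rw [hfdef]
    exact Int.toNat_of_nonneg (by linarith [hdy (l : ℕ) (by omega : (l : ℕ) + 1 ≤ k)])
  have hfpos : ∀ l : Fin k, 0 < (f l).1 ∧ 0 < (f l).2 := by
    intro l
    constructor
    · have := hfx l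
      have h2 := hQQlt (l : ℕ) ((l : ℕ) + 1) (by omega) (by omega : (l : ℕ) + 1 ≤ k)
      omega
    · have := hfy l
      have h2 := hdy (l : ℕ) (by omega : (l : ℕ) + 1 ≤ k)
      omega
  -- partial sums of f recover QQ
  have hsum1 : ∀ n : ℕ, n ≤ k →
      (∑ l : Fin k, if (l : ℕ) < n then ((f l).1 : ℤ) else 0) = (QQ n).1 := by
    intro n hn
    have h1 : (∑ l : Fin k, if (l : ℕ) < n then ((f l).1 : ℤ) else 0) =
        ∑ l : Fin k, (fun t : ℕ => if t < n then (QQ (t + 1)).1 - (QQ t).1 else 0) (l : ℕ) := by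
      refine Finset.sum_congr rfl fun l _ => ?_
      simp only
      split_ifs with h
      · exact hfx l
      · rfl
    rw [h1, Fin.sum_univ_eq_sum_range (fun t : ℕ => if t < n then (QQ (t + 1)).1 - (QQ t).1 else 0) k]
    rw [← Finset.sum_subset (Finset.range_subset_range.2 hn)
      (fun x _ hx => if_neg (by simp at hx ⊢; omega))]
    rw [Finset.sum_congr rfl (fun x hx => if_pos (Finset.mem_range.1 hx))]
    rw [Finset.sum_range_sub (fun t => (QQ t).1)]
    rw [hQQ0]
    simp
  have hsum2 : ∀ n : ℕ, n ≤ k →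
      (∑ l : Fin k, if (l : ℕ) < n then ((f l).2 : ℤ) else 0) = (QQ n).2 := by
    intro n hn
    have h1 : (∑ l : Fin k, if (l : ℕ) < n then ((f l).2 : ℤ) else 0) =
        ∑ l : Fin k, (fun t : ℕ => if t < n then (QQ (t + 1)).2 - (QQ t).2 else 0) (l : ℕ) := by
      refine Finset.sum_congr rfl fun l _ => ?_
      simp only
      split_ifs with h
      · exact hfy l
      · rfl
    rw [h1, Fin.sum_univ_eq_sum_range (fun t : ℕ => if t < n then (QQ (t + 1)).2 - (QQ t).2 else 0) k]
    rw [← Finset.sum_subset (Finset.range_subset_range.2 hn)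
      (fun x _ hx => if_neg (by simp at hx ⊢; omega))]
    rw [Finset.sum_congr rfl (fun x hx => if_pos (Finset.mem_range.1 hx))]
    rw [Finset.sum_range_sub (fun t => (QQ t).2)]
    rw [hQQ0]
    simp
  have hptsP : ∀ m : Fin (k + 1), ptsP f m = Q m := by
    intro m
    have hm : (m : ℕ) ≤ k := Nat.lt_succ_iff.1 m.isLt
    rw [← hQQeq m]
    exact Prod.ext (hsum1 (m : ℕ) hm) (hsum2 (m : ℕ) hm)
  -- the sums
  have hsx : ∑ l, (f l).1 = i := by
    have := hsum1 k le_rfl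
    rw [hQQk] at this
    have h2 : (∑ l : Fin k, if (l : ℕ) < k then ((f l).1 : ℤ) else 0) =
        ∑ l : Fin k, ((f l).1 : ℤ) :=
      Finset.sum_congr rfl fun l _ => if_pos l.isLt
    rw [h2] at this
    have h3 : ((∑ l, (f l).1 : ℕ) : ℤ) = (i : ℤ) := by push_cast; exact this
    exact_mod_cast h3
  have hsy : ∑ l, (f l).2 = j := by
    have := hsum2 k le_rfl
    rw [hQQk] at this
    have h2 : (∑ l : Fin k, if (l : ℕ) < k then ((f l).2 : ℤ) else 0) =
        ∑ l : Fin k, ((f l).2 : ℤ) :=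
      Finset.sum_congr rfl fun l _ => if_pos l.isLt
    rw [h2] at this
    have h3 : ((∑ l, (f l).2 : ℕ) : ℤ) = (j : ℤ) := by push_cast; exact this
    exact_mod_cast h3
  -- slopes
  have hconsec : ∀ n (h : n + 1 < k), ((f ⟨n, by omega⟩).2 : ℚ) / ((f ⟨n, by omega⟩).1 : ℚ) <
      ((f ⟨n + 1, h⟩).2 : ℚ) / ((f ⟨n + 1, h⟩).1 : ℚ) := by
    intro n h
    have hx1 : (0 : ℚ) < ((f ⟨n, by omega⟩).1 : ℚ) := by
      exact_mod_cast (hfpos ⟨n, by omega⟩).1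
    have hx2 : (0 : ℚ) < ((f ⟨n + 1, h⟩).1 : ℚ) := by exact_mod_cast (hfpos ⟨n + 1, h⟩).1
    rw [div_lt_div_iff₀ hx1 hx2]
    have hcr := hcrossQ n (by omega)
    have key : ((f ⟨n, by omega⟩).2 : ℤ) * ((f ⟨n + 1, h⟩).1 : ℤ) <
        ((f ⟨n + 1, h⟩).2 : ℤ) * ((f ⟨n, by omega⟩).1 : ℤ) := by
      rw [hfx, hfy, hfx, hfy]
      simp only [Fin.val_mk]
      exact hcr
    exact_mod_cast key
  have hslope : ∀ l₁ l₂ : Fin k, l₁ < l₂ →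
      ((f l₁).2 : ℚ) / ((f l₁).1 : ℚ) < ((f l₂).2 : ℚ) / ((f l₂).1 : ℚ) := by
    have main : ∀ (b : ℕ) (hb : b < k) (a : ℕ) (ha : a < k), a < b →
        ((f ⟨a, ha⟩).2 : ℚ) / ((f ⟨a, ha⟩).1 : ℚ) < ((f ⟨b, hb⟩).2 : ℚ) / ((f ⟨b, hb⟩).1 : ℚ) := by
      intro b
      induction b with
      | zero => intro _ a _ h; omega
      | succ b ih =>
        intro hb a ha h
        rcases Nat.lt_succ_iff_lt_or_eq.1 h with h' | h'
        · exact lt_trans (ih (by omega) a ha h') (hconsec b hb)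
        · subst h'
          exact hconsec a hb
    intro l₁ l₂ h
    have := main (l₂ : ℕ) l₂.isLt (l₁ : ℕ) l₁.isLt (Fin.lt_def.1 h)
    simpa using this
  -- image equality
  have himg : Finset.image (ptsP f) Finset.univ = V := by
    have h1 : Finset.image (ptsP f) Finset.univ = Finset.image Q Finset.univ := by
      refine Finset.image_congr fun m _ => hptsP m
    rw [h1]
    have hQinj : Function.Injective Q := by
      intro a b hab
      by_contra hne
      rcases lt_or_gt_of_ne hne with h | h
      · exact absurd (congrArg Prod.fst hab) (ne_of_lt (hQmono _ _ h))
      · exact absurd (congrArg Prod.fst hab).symm (ne_of_lt (hQmono _ _ h))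
    refine Finset.eq_of_subset_of_card_le (fun v hv => ?_) ?_
    · obtain ⟨m, _, rfl⟩ := Finset.mem_image.1 hv
      exact hQmem m
    · rw [hcard, Finset.card_image_of_injective _ hQinj, Finset.card_univ, Fintype.card_fin]
  exact ⟨f, ⟨hfpos, hsx, hsy, hslope⟩, himg⟩

end surj2


/-- Bijection between tuples `((x_l,y_l))_{l≤k}` (positive coordinates, sums `i`, `j`, strictly
increasing slopes) and convex `(k+1)`-gons with lattice vertices contained in the triangle `Δ`
with vertices `(0,0),(i,0),(i,j)`, having the segment `L` from `(0,0)` to `(i,j)` as an edge and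
meeting the horizontal and vertical edges of `Δ` only at `(0,0)` and `(i,j)`.  A polygon is
encoded by its vertex set: a finset of `ℤ × ℤ` of cardinality `k+1` in convex position (no
element lies in the convex hull of the others), containing `(0,0)` and `(i,j)`, all other
vertices lying strictly inside `Δ` off the line `L` (`0 < y`, `x < i`, `i·y < j·x`). -/
theorem stmt7 (i j k : ℕ) (hi : 0 < i) (hj : 0 < j) (hk : 1 ≤ k) :
    Set.BijOn
      (fun f : Fin k → ℕ × ℕ =>
        Finset.image (fun m : Fin (k + 1) =>
          ((∑ l : Fin k, if (l : ℕ) < (m : ℕ) then ((f l).1 : ℤ) else 0),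
           (∑ l : Fin k, if (l : ℕ) < (m : ℕ) then ((f l).2 : ℤ) else 0))) Finset.univ)
      {f : Fin k → ℕ × ℕ | (∀ l, 0 < (f l).1 ∧ 0 < (f l).2) ∧
        (∑ l, (f l).1 = i) ∧ (∑ l, (f l).2 = j) ∧
        ∀ l₁ l₂ : Fin k, l₁ < l₂ →
          ((f l₁).2 : ℚ) / ((f l₁).1 : ℚ) < ((f l₂).2 : ℚ) / ((f l₂).1 : ℚ)}
      {V : Finset (ℤ × ℤ) | V.card = k + 1 ∧ ((0, 0) : ℤ × ℤ) ∈ V ∧ ((i : ℤ), (j : ℤ)) ∈ V ∧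
        (∀ v ∈ V, ¬ (((v.1 : ℝ), (v.2 : ℝ)) ∈ convexHull ℝ
            ((fun p : ℤ × ℤ => ((p.1 : ℝ), (p.2 : ℝ))) '' ((V.erase v : Finset (ℤ × ℤ)) : Set (ℤ × ℤ))))) ∧
        (∀ v ∈ V, v ≠ ((0, 0) : ℤ × ℤ) → v ≠ ((i : ℤ), (j : ℤ)) →
          0 < v.2 ∧ v.1 < (i : ℤ) ∧ (i : ℤ) * v.2 < (j : ℤ) * v.1)} := by
  refine ⟨?_, ?_, ?_⟩
  · intro f hf
    obtain ⟨hpos, hsx, hsy, hslope⟩ := hf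
    exact mapsto_aux hi hj hk hpos hsx hsy hslope
  · intro f hf g hg h
    exact inj_aux hf.1 hg.1 h
  · intro V hV
    obtain ⟨hcard, h00, hij, hconv, hint⟩ := hV
    obtain ⟨f, hfsrc, himg⟩ := surj_aux hi hj hk hcard h00 hij hconv hint
    exact ⟨f, hfsrc, himg⟩
end

section
/- Fix positive integers i, j, let Δ be the triangle with vertices (0,0), (i,0), (i,j), and let L be the segment from (0,0) to (i,j). Let C be the set of convex polygons with lattice-point vertices contained in Δ, having L as an edge, and meeting the horizontal and vertical edges of Δ only at (0,0) and (i,j). For P ∈ C, let u(P) be the number of lattice points that are interior to Δ but not contained in P, and let v(P) be the number of vertices of P (with v(L) = 2). Then ∑_{P ∈ C} x^{u(P)} (1 − x)^{v(P) − 2} = 1 as an identity of polynomials in x. -/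
open scoped Classical

open Set

section AuxConvex


variable {E : Type*} [AddCommGroup E] [Module ℝ E]

/-- A point of `s` not in the hull of the rest is an extreme point of the hull. -/
lemma aux_extreme_of_not_mem_hull_diff {s : Set E} {x : E} (hx : x ∈ s)
    (hex : x ∉ convexHull ℝ (s \ {x})) :
    x ∈ (convexHull ℝ s).extremePoints ℝ := by
  rcases eq_empty_or_nonempty (s \ {x}) with hempty | hne
  · have hs : s = {x} := by
      apply Subset.antisymm
      · intro y hy
        by_contra hyx
        exact (eq_empty_iff_forall_notMem.1 hempty) y ⟨hy, hyx⟩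
      · exact singleton_subset_iff.2 hx
    rw [hs, convexHull_singleton, extremePoints_singleton]
    rfl
  · rw [mem_extremePoints_iff_forall_segment]
    refine ⟨subset_convexHull ℝ s hx, ?_⟩
    intro x₁ hx₁ x₂ hx₂ hseg
    by_contra hcon
    push_neg at hcon
    obtain ⟨hne₁, hne₂⟩ := hcon
    have hins : insert x (s \ {x}) = s := by
      rw [insert_diff_singleton, insert_eq_self.2 hx]
    have hhull : convexHull ℝ s = convexJoin ℝ {x} (convexHull ℝ (s \ {x})) := by
      conv_lhs => rw [← hins]
      exact convexHull_insert hne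
    rw [hhull, mem_convexJoin] at hx₁ hx₂
    obtain ⟨a₀, ha₀, z₁, hz₁, hxseg₁⟩ := hx₁
    obtain ⟨b₀, hb₀, z₂, hz₂, hxseg₂⟩ := hx₂
    rw [mem_singleton_iff] at ha₀ hb₀
    rw [ha₀] at hxseg₁
    rw [hb₀] at hxseg₂
    obtain ⟨a, a', ha, ha', haa, hEq1⟩ := hxseg₁
    obtain ⟨b, b', hb, hb', hbb, hEq2⟩ := hxseg₂
    obtain ⟨c, d, hc, hd, hcd, hEq⟩ := hseg
    have htnn : 0 ≤ c * a' + d * b' :=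
      add_nonneg (mul_nonneg hc ha') (mul_nonneg hd hb')
    have h2 : (c * a + d * b) + (c * a' + d * b') = 1 := by
      have h5 : c * (a + a') + d * (b + b') = c + d := by rw [haa, hbb]; ring
      linear_combination h5 + hcd
    have h3 : (1 - (c * a' + d * b')) • x + ((c * a') • z₁ + (d * b') • z₂) = x := by
      have h8 : (1 : ℝ) - (c * a' + d * b') = c * a + d * b := by linarith
      rw [h8]
      conv_rhs => rw [← hEq, ← hEq1, ← hEq2]
      module
    have hkey : (c * a' + d * b') • x = (c * a') • z₁ + (d * b') • z₂ := by
      have h9 : (c * a' + d * b') • x = x - (1 - (c * a' + d * b')) • x := by module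
      have h10 : x - (1 - (c * a' + d * b')) • x = (c * a') • z₁ + (d * b') • z₂ := by
        rw [sub_eq_iff_eq_add']
        exact h3.symm
      rw [h9, h10]
    rcases eq_or_lt_of_le htnn with hteq | htpos
    · have hca' : c * a' = 0 := by nlinarith [mul_nonneg hc ha', mul_nonneg hd hb']
      rcases mul_eq_zero.1 hca' with hc0 | ha'0
      · have hd1 : d = 1 := by linarith
        rw [hc0, hd1] at hEq
        simp only [zero_smul, one_smul, zero_add] at hEq
        exact hne₂ hEq
      · have ha1 : a = 1 := by linarith
        rw [ha'0, ha1] at hEq1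
        simp only [zero_smul, one_smul, add_zero] at hEq1
        exact hne₁ hEq1.symm
    · set t : ℝ := c * a' + d * b' with ht
      have hmem : (t⁻¹ * (c * a')) • z₁ + (t⁻¹ * (d * b')) • z₂ ∈ convexHull ℝ (s \ {x}) := by
        apply (convex_convexHull ℝ (s \ {x})) hz₁ hz₂
        · positivity
        · positivity
        · field_simp; exact ht.symm
      have h5 : (t⁻¹ * (c * a')) • z₁ + (t⁻¹ * (d * b')) • z₂ = t⁻¹ • (t • x) := by
        rw [hkey]; module
      rw [smul_smul, inv_mul_cancel₀ htpos.ne', one_smul] at h5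
      exact hex (h5 ▸ hmem)

lemma aux_not_mem_hull_of_extreme {s t : Set E} {x : E} (hx : x ∈ s)
    (hex : x ∉ convexHull ℝ (s \ {x})) (ht : t ⊆ convexHull ℝ s) (hxt : x ∉ t) :
    x ∉ convexHull ℝ t := by
  have h := aux_extreme_of_not_mem_hull_diff hx hex
  rw [(convex_convexHull ℝ s).mem_extremePoints_iff_mem_diff_convexHull_diff] at h
  intro hmem
  exact h.2 (convexHull_mono (subset_diff_singleton ht hxt) hmem)

/-- The convex hull of a finite set equals the hull of its "vertices". -/
lemma aux_hull_vertices [DecidableEq E] (F : Finset E) :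
    convexHull ℝ ((F.filter (fun v => v ∉ convexHull ℝ ((F.erase v : Finset E) : Set E)) :
      Finset E) : Set E) = convexHull ℝ (F : Set E) := by
  induction F using Finset.strongInduction with
  | _ F ih =>
    by_cases hall : ∀ v ∈ F, v ∉ convexHull ℝ ((F.erase v : Finset E) : Set E)
    · rw [Finset.filter_true_of_mem hall]
    · push_neg at hall
      obtain ⟨a, haF, ha⟩ := hall
      have herase : convexHull ℝ ((F.erase a : Finset E) : Set E) = convexHull ℝ (F : Set E) := by
        apply Subset.antisymm (convexHull_mono (by exact_mod_cast Finset.erase_subset a F))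
        apply convexHull_min _ (convex_convexHull ℝ _)
        intro y hy
        by_cases hya : y = a
        · rw [hya]; exact ha
        · exact subset_convexHull ℝ _ (by
            simp only [Finset.coe_erase, mem_diff, mem_singleton_iff]
            exact ⟨hy, hya⟩)
      have hsub : (F.erase a).filter
          (fun v => v ∉ convexHull ℝ (((F.erase a).erase v : Finset E) : Set E)) ⊆
          F.filter (fun v => v ∉ convexHull ℝ ((F.erase v : Finset E) : Set E)) := by
        intro v hv
        rw [Finset.mem_filter] at hv ⊢
        obtain ⟨hv1, hv2⟩ := hv
        refine ⟨Finset.mem_of_mem_erase hv1, ?_⟩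
        apply aux_not_mem_hull_of_extreme (s := ((F.erase a : Finset E) : Set E))
          (Finset.mem_coe.2 hv1)
        · rwa [← Finset.coe_erase]
        · intro y hy
          rw [Finset.mem_coe, Finset.mem_erase] at hy
          by_cases hya : y = a
          · rw [hya]; exact ha
          · exact subset_convexHull ℝ _ (Finset.mem_coe.2 (Finset.mem_erase.2 ⟨hya, hy.2⟩))
        · simp
      have hIH := ih (F.erase a) (Finset.erase_ssubset haF)
      apply Subset.antisymm
      · exact convexHull_mono (by exact_mod_cast Finset.filter_subset _ F)
      · rw [← herase, ← hIH]
        exact convexHull_mono (by exact_mod_cast hsub)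

lemma aux_binomial {α : Type*} (F : Finset α) (x : ℝ) :
    ∑ W ∈ F.powerset, x ^ W.card * (1 - x) ^ (F.card - W.card) = 1 := by
  classical
  have h := Finset.prod_add (fun _ : α => x) (fun _ : α => 1 - x) F
  simp only [Finset.prod_const] at h
  have h2 : ∀ W ∈ F.powerset, x ^ W.card * (1 - x) ^ (F \ W).card
      = x ^ W.card * (1 - x) ^ (F.card - W.card) := by
    intro W hW
    rw [Finset.card_sdiff_of_subset (Finset.mem_powerset.1 hW)]
  rw [Finset.sum_congr rfl h2] at h
  rw [← h]
  simp


lemma aux_tri_hull (i j : ℝ) (hi : 0 < i) (hj : 0 < j) :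
    convexHull ℝ {((0 : ℝ), (0 : ℝ)), (i, (0 : ℝ)), (i, j)}
      = {p : ℝ × ℝ | 0 ≤ p.2 ∧ p.1 ≤ i ∧ i * p.2 ≤ j * p.1} := by
  apply Subset.antisymm
  · apply convexHull_min
    · rintro p (rfl | rfl | rfl) <;>
        simp only [mem_setOf_eq] <;>
        constructor <;> try constructor
      all_goals nlinarith
    · intro p hp q hq a b ha hb hab
      simp only [mem_setOf_eq, Prod.smul_fst, Prod.smul_snd, Prod.fst_add, Prod.snd_add,
        smul_eq_mul] at hp hq ⊢
      refine ⟨by nlinarith [hp.1, hq.1], by nlinarith [hp.2.1, hq.2.1], ?_⟩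
      nlinarith [mul_le_mul_of_nonneg_left hp.2.2 ha, mul_le_mul_of_nonneg_left hq.2.2 hb]
  · intro p hp
    obtain ⟨h1, h2, h3⟩ := hp
    by_cases hp1 : p.1 ≤ 0
    · have hp1' : p.1 = 0 := le_antisymm hp1 (by nlinarith)
      have hp2' : p.2 = 0 := le_antisymm (by nlinarith) h1
      have : p = ((0 : ℝ), (0 : ℝ)) := Prod.ext hp1' hp2'
      rw [this]
      exact subset_convexHull ℝ _ (by simp)
    · push_neg at hp1
      set q : ℝ × ℝ := (i, i * p.2 / p.1) with hq
      have hqmem : q ∈ convexHull ℝ {((0 : ℝ), (0 : ℝ)), (i, (0 : ℝ)), (i, j)} := by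
        have hseg : q ∈ segment ℝ ((i : ℝ), (0 : ℝ)) ((i : ℝ), j) := by
          refine ⟨1 - (i * p.2 / p.1) / j, (i * p.2 / p.1) / j, ?_, ?_, by ring, ?_⟩
          · have : i * p.2 / p.1 ≤ j := by
              rw [div_le_iff₀ hp1]
              nlinarith
            have hnn : 0 ≤ i * p.2 / p.1 := by positivity
            rw [sub_nonneg, div_le_one hj]
            exact this
          · positivity
          · apply Prod.ext <;>
              simp only [Prod.smul_fst, Prod.smul_snd, Prod.fst_add, Prod.snd_add,
                smul_eq_mul, hq]
            · ring
            · field_simp; ring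
        apply (convex_convexHull ℝ _).segment_subset
          (subset_convexHull ℝ _ (by simp)) (subset_convexHull ℝ _ (by simp)) hseg
      have hseg2 : p ∈ segment ℝ ((0 : ℝ), (0 : ℝ)) q := by
        refine ⟨1 - p.1 / i, p.1 / i, ?_, by positivity, by ring, ?_⟩
        · rw [sub_nonneg, div_le_one hi]; exact h2
        · apply Prod.ext <;>
            simp only [Prod.smul_fst, Prod.smul_snd, Prod.fst_add, Prod.snd_add,
              smul_eq_mul, hq]
          · field_simp; ring
          · field_simp; ring
      exact (convex_convexHull ℝ _).segment_subset
        (subset_convexHull ℝ _ (by simp)) hqmem hseg2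

lemma aux_tri_interior (i j : ℝ) (hi : 0 < i) (hj : 0 < j) :
    interior (convexHull ℝ {((0 : ℝ), (0 : ℝ)), (i, (0 : ℝ)), (i, j)})
      = {p : ℝ × ℝ | 0 < p.2 ∧ p.1 < i ∧ i * p.2 < j * p.1} := by
  rw [aux_tri_hull i j hi hj]
  apply Subset.antisymm
  · intro p hp
    rw [mem_interior_iff_mem_nhds, Metric.mem_nhds_iff] at hp
    obtain ⟨ε, hε, hball⟩ := hp
    have hdist : ∀ q : ℝ × ℝ, dist q.1 p.1 < ε → dist q.2 p.2 < ε → q ∈ Metric.ball p ε := by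
      intro q hq1 hq2
      rw [Metric.mem_ball, Prod.dist_eq]
      exact max_lt hq1 hq2
    have hd0 : ∀ a : ℝ, dist a a < ε := by intro a; rw [dist_self]; linarith
    have hdplus : ∀ a : ℝ, dist (a + ε / 2) a < ε := by
      intro a
      rw [Real.dist_eq, show a + ε / 2 - a = ε / 2 by ring, abs_of_pos (by linarith)]
      linarith
    have hdminus : ∀ a : ℝ, dist (a - ε / 2) a < ε := by
      intro a
      rw [Real.dist_eq, show a - ε / 2 - a = -(ε / 2) by ring, abs_neg,
        abs_of_pos (by linarith)]
      linarith
    have key1 := hball (hdist (p.1, p.2 - ε / 2) (hd0 _) (hdminus _))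
    have key2 := hball (hdist (p.1 + ε / 2, p.2) (hdplus _) (hd0 _))
    have key3 := hball (hdist (p.1 - ε / 2, p.2) (hdminus _) (hd0 _))
    simp only [mem_setOf_eq] at key1 key2 key3 ⊢
    refine ⟨by linarith [key1.1], by linarith [key2.2.1], ?_⟩
    have := key3.2.2
    nlinarith
  · apply interior_maximal
    · intro p hp
      simp only [mem_setOf_eq] at hp ⊢
      exact ⟨le_of_lt hp.1, le_of_lt hp.2.1, le_of_lt hp.2.2⟩
    · have h1 : IsOpen {p : ℝ × ℝ | 0 < p.2} := isOpen_lt continuous_const continuous_snd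
      have h2 : IsOpen {p : ℝ × ℝ | p.1 < i} := isOpen_lt continuous_fst continuous_const
      have h3 : IsOpen {p : ℝ × ℝ | i * p.2 < j * p.1} :=
        isOpen_lt (continuous_const.mul continuous_snd) (continuous_const.mul continuous_fst)
      have : {p : ℝ × ℝ | 0 < p.2 ∧ p.1 < i ∧ i * p.2 < j * p.1}
          = {p : ℝ × ℝ | 0 < p.2} ∩ ({p : ℝ × ℝ | p.1 < i} ∩ {p : ℝ × ℝ | i * p.2 < j * p.1}) := by
        ext p; simp [mem_setOf_eq, mem_inter_iff, and_assoc]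
      rw [this]
      exact h1.inter (h2.inter h3)

end AuxConvex

/-- Main combinatorial lemma: with `Δ` the triangle with vertices `(0,0),(i,0),(i,j)` and `C` the
(finite) set of convex lattice polygons contained in `Δ`, having the segment `L` from `(0,0)` to
`(i,j)` as an edge and meeting the horizontal/vertical edges of `Δ` only at `(0,0)` and `(i,j)`
(each polygon encoded by its vertex finset, in convex position), one has
`∑_{P ∈ C} x^{u(P)} (1 − x)^{v(P) − 2} = 1`, where `u(P)` is the number of lattice points
interior to `Δ` not contained in `P`, and `v(P)` is the number of vertices of `P`. -/
theorem stmt9 (i j : ℕ) (hi : 0 < i) (hj : 0 < j)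
    (coe : ℤ × ℤ → ℝ × ℝ) (hcoe : coe = fun p => ((p.1 : ℝ), (p.2 : ℝ)))
    (Δ : Set (ℝ × ℝ))
    (hΔ : Δ = convexHull ℝ {((0 : ℝ), (0 : ℝ)), ((i : ℝ), (0 : ℝ)), ((i : ℝ), (j : ℝ))})
    (C : Finset (Finset (ℤ × ℤ)))
    (hC : C = (Finset.Icc ((0 : ℤ), (0 : ℤ)) ((i : ℤ), (j : ℤ))).powerset.filter (fun V =>
      2 ≤ V.card ∧ ((0, 0) : ℤ × ℤ) ∈ V ∧ ((i : ℤ), (j : ℤ)) ∈ V ∧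
      (∀ v ∈ V, coe v ∉ convexHull ℝ (coe '' ((V.erase v : Finset (ℤ × ℤ)) : Set (ℤ × ℤ)))) ∧
      (∀ v ∈ V, v ≠ ((0, 0) : ℤ × ℤ) → v ≠ ((i : ℤ), (j : ℤ)) →
        0 < v.2 ∧ v.1 < (i : ℤ) ∧ (i : ℤ) * v.2 < (j : ℤ) * v.1))) :
    ∀ x : ℝ, ∑ V ∈ C,
        x ^ ({p : ℤ × ℤ | coe p ∈ interior Δ ∧
              coe p ∉ convexHull ℝ (coe '' ((V : Finset (ℤ × ℤ)) : Set (ℤ × ℤ)))}.ncard)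
          * (1 - x) ^ (V.card - 2) = 1 := by
  -- basic notation
  set o : ℤ × ℤ := ((0 : ℤ), (0 : ℤ)) with ho
  set z : ℤ × ℤ := ((i : ℤ), (j : ℤ)) with hz
  have hiZ : (0 : ℤ) < (i : ℤ) := by exact_mod_cast hi
  have hjZ : (0 : ℤ) < (j : ℤ) := by exact_mod_cast hj
  have hinj : Function.Injective coe := by
    intro p q h
    rw [hcoe] at h
    simp only [Prod.mk.injEq] at h
    exact Prod.ext (by exact_mod_cast h.1) (by exact_mod_cast h.2)
  have hozne : o ≠ z := by
    rw [ho, hz]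
    intro h
    rw [Prod.mk.injEq] at h
    omega
  -- the finset of interior lattice points
  set S : Finset (ℤ × ℤ) := (Finset.Icc o z).filter
    (fun p => 0 < p.2 ∧ p.1 < (i : ℤ) ∧ (i : ℤ) * p.2 < (j : ℤ) * p.1) with hSdef
  have hSmem : ∀ p : ℤ × ℤ, p ∈ S ↔
      (0 < p.2 ∧ p.1 < (i : ℤ) ∧ (i : ℤ) * p.2 < (j : ℤ) * p.1) := by
    intro p
    rw [hSdef, Finset.mem_filter]
    constructor
    · exact fun h => h.2
    · intro h
      refine ⟨?_, h⟩
      rw [Finset.mem_Icc]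
      obtain ⟨h1, h2, h3⟩ := h
      constructor
      · rw [ho, Prod.le_def]
        constructor
        · simp only []
          nlinarith
        · simp only []
          nlinarith
      · rw [hz, Prod.le_def]
        constructor
        · simp only []
          nlinarith
        · simp only []
          nlinarith
  -- characterization of interior lattice points
  have hIntChar : ∀ p : ℤ × ℤ, coe p ∈ interior Δ ↔ p ∈ S := by
    intro p
    rw [hΔ, aux_tri_interior (i : ℝ) (j : ℝ) (by exact_mod_cast hi) (by exact_mod_cast hj),
      hcoe, hSmem]
    simp only [mem_setOf_eq]
    constructor
    · rintro ⟨h1, h2, h3⟩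
      exact ⟨by exact_mod_cast h1, by exact_mod_cast h2, by exact_mod_cast h3⟩
    · rintro ⟨h1, h2, h3⟩
      exact ⟨by exact_mod_cast h1, by exact_mod_cast h2, by exact_mod_cast h3⟩
  -- membership in C unpacked
  have hCmem : ∀ V : Finset (ℤ × ℤ), V ∈ C ↔
      (V ⊆ Finset.Icc o z ∧ 2 ≤ V.card ∧ o ∈ V ∧ z ∈ V ∧
       (∀ v ∈ V, coe v ∉ convexHull ℝ (coe '' ((V.erase v : Finset (ℤ × ℤ)) : Set (ℤ × ℤ)))) ∧
       (∀ v ∈ V, v ≠ o → v ≠ z →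
         0 < v.2 ∧ v.1 < (i : ℤ) ∧ (i : ℤ) * v.2 < (j : ℤ) * v.1)) := by
    intro V
    rw [hC, Finset.mem_filter, Finset.mem_powerset]
  -- vertices of a Finset
  set vert : Finset (ℤ × ℤ) → Finset (ℤ × ℤ) := fun U => U.filter
    (fun v => coe v ∉ convexHull ℝ (coe '' ((U.erase v : Finset (ℤ × ℤ)) : Set (ℤ × ℤ)))) with hvert
  -- hull of vertices equals hull
  have hhullvert : ∀ U : Finset (ℤ × ℤ),
      convexHull ℝ (coe '' ((vert U : Finset (ℤ × ℤ)) : Set (ℤ × ℤ)))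
        = convexHull ℝ (coe '' (U : Set (ℤ × ℤ))) := by
    intro U
    have himg : ∀ W : Finset (ℤ × ℤ), coe '' (W : Set (ℤ × ℤ)) = ((W.image coe : Finset (ℝ × ℝ)) : Set (ℝ × ℝ)) :=
      fun W => (Finset.coe_image).symm
    have hGfilter : (U.image coe).filter
        (fun w => w ∉ convexHull ℝ (((U.image coe).erase w : Finset (ℝ × ℝ)) : Set (ℝ × ℝ)))
        = (vert U).image coe := by
      ext w
      simp only [Finset.mem_filter, Finset.mem_image, hvert]
      constructor
      · rintro ⟨⟨u, hu, rfl⟩, hw⟩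
        refine ⟨u, ⟨hu, ?_⟩, rfl⟩
        rw [himg, Finset.image_erase hinj]
        exact hw
      · rintro ⟨u, ⟨hu, hnotin⟩, rfl⟩
        refine ⟨⟨u, hu, rfl⟩, ?_⟩
        rw [← Finset.image_erase hinj, ← himg]
        exact hnotin
    rw [himg (vert U), himg U, ← hGfilter]
    exact aux_hull_vertices (U.image coe)
  -- bounds for points of S
  have hS1 : ∀ p ∈ S, 1 ≤ p.1 := by
    intro p hp
    rw [hSmem] at hp
    nlinarith [hp.1, hp.2.2]
  have hS2 : ∀ p ∈ S, p.2 ≤ (j : ℤ) - 1 := by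
    intro p hp
    rw [hSmem] at hp
    nlinarith [hp.2.1, hp.2.2]
  have hoIcc : o ∈ Finset.Icc o z := by
    rw [Finset.mem_Icc]
    refine ⟨le_refl o, ?_⟩
    rw [ho, hz, Prod.le_def]
    constructor <;> simp <;> omega
  have hzIcc : z ∈ Finset.Icc o z := by
    rw [Finset.mem_Icc]
    refine ⟨?_, le_refl z⟩
    rw [ho, hz, Prod.le_def]
    constructor <;> simp <;> omega
  -- the "unmarked points" set and the polygon associated to a marking
  set Uof : Finset (ℤ × ℤ) → Finset (ℤ × ℤ) := fun M => (S \ M) ∪ {o, z} with hUof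
  set ψ : Finset (ℤ × ℤ) → Finset (ℤ × ℤ) := fun M => vert (Uof M) with hψ
  have hUmem : ∀ (M : Finset (ℤ × ℤ)) (q : ℤ × ℤ),
      q ∈ Uof M ↔ ((q ∈ S ∧ q ∉ M) ∨ q = o ∨ q = z) := by
    intro M q
    rw [hUof]
    simp only [Finset.mem_union, Finset.mem_sdiff, Finset.mem_insert, Finset.mem_singleton]
  have hUo : ∀ M, o ∈ Uof M := fun M => (hUmem M o).2 (Or.inr (Or.inl rfl))
  have hUz : ∀ M, z ∈ Uof M := fun M => (hUmem M z).2 (Or.inr (Or.inr rfl))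
  -- o and z are always vertices of Uof M
  have hfstlin : IsLinearMap ℝ (fun w : ℝ × ℝ => w.1) := ⟨fun a b => rfl, fun c a => rfl⟩
  have hsndlin : IsLinearMap ℝ (fun w : ℝ × ℝ => w.2) := ⟨fun a b => rfl, fun c a => rfl⟩
  have hoVert : ∀ M, o ∈ vert (Uof M) := by
    intro M
    rw [hvert]
    refine Finset.mem_filter.2 ⟨hUo M, ?_⟩
    intro hcon
    have hsub : coe '' (((Uof M).erase o : Finset (ℤ × ℤ)) : Set (ℤ × ℤ))
        ⊆ {w : ℝ × ℝ | 1 ≤ w.1} := by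
      rintro w ⟨q, hq, rfl⟩
      rw [Finset.mem_coe, Finset.mem_erase] at hq
      obtain ⟨hqo, hqU⟩ := hq
      rcases (hUmem M q).1 hqU with ⟨hqS, _⟩ | rfl | rfl
      · have := hS1 q hqS
        rw [hcoe]
        simp only [mem_setOf_eq]
        exact_mod_cast this
      · exact absurd rfl hqo
      · rw [hcoe, hz]
        simp only [mem_setOf_eq]
        exact_mod_cast hiZ
    have := convexHull_min hsub (convex_halfSpace_ge hfstlin 1) hcon
    rw [hcoe, ho] at this
    simp only [mem_setOf_eq] at this
    norm_num at this
  have hzVert : ∀ M, z ∈ vert (Uof M) := by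
    intro M
    rw [hvert]
    refine Finset.mem_filter.2 ⟨hUz M, ?_⟩
    intro hcon
    have hsub : coe '' (((Uof M).erase z : Finset (ℤ × ℤ)) : Set (ℤ × ℤ))
        ⊆ {w : ℝ × ℝ | w.2 ≤ (j : ℝ) - 1} := by
      rintro w ⟨q, hq, rfl⟩
      rw [Finset.mem_coe, Finset.mem_erase] at hq
      obtain ⟨hqz, hqU⟩ := hq
      rcases (hUmem M q).1 hqU with ⟨hqS, _⟩ | rfl | rfl
      · have := hS2 q hqS
        rw [hcoe]
        simp only [mem_setOf_eq]
        have : (q.2 : ℝ) ≤ ((j : ℤ) : ℝ) - 1 := by exact_mod_cast this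
        exact_mod_cast this
      · rw [hcoe, ho]
        simp only [mem_setOf_eq]
        push_cast
        have : (1 : ℝ) ≤ (j : ℝ) := by exact_mod_cast hj
        linarith
      · exact absurd rfl hqz
    have := convexHull_min hsub (convex_halfSpace_le hsndlin ((j : ℝ) - 1)) hcon
    rw [hcoe, hz] at this
    simp only [mem_setOf_eq] at this
    have hj1 : ((((i : ℤ), (j : ℤ)) : ℤ × ℤ).2 : ℝ) = (j : ℝ) := by push_cast; rfl
    rw [hj1] at this
    linarith
  -- Claim A: for every M ⊆ S, ψ M is a valid polygon and M is compatible with it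
  have hA : ∀ M : Finset (ℤ × ℤ), M ⊆ S →
      (ψ M ∈ C ∧
       S.filter (fun p => coe p ∉ convexHull ℝ (coe '' ((ψ M : Finset (ℤ × ℤ)) : Set (ℤ × ℤ)))) ⊆ M ∧
       Disjoint M (((ψ M).erase o).erase z)) := by
    intro M hM
    have hUIcc : Uof M ⊆ Finset.Icc o z := by
      intro q hq
      rcases (hUmem M q).1 hq with ⟨hqS, _⟩ | rfl | rfl
      · exact (Finset.filter_subset _ _) hqS
      · exact hoIcc
      · exact hzIcc
    have hvsub : ψ M ⊆ Uof M := by rw [hψ, hvert]; exact Finset.filter_subset _ _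
    refine ⟨?_, ?_, ?_⟩
    · rw [hCmem]
      refine ⟨hvsub.trans hUIcc, ?_, hoVert M, hzVert M, ?_, ?_⟩
      · have hpair : ({o, z} : Finset (ℤ × ℤ)) ⊆ ψ M := by
          intro q hq
          rcases Finset.mem_insert.1 hq with rfl | hq
          · exact hoVert M
          · rw [Finset.mem_singleton] at hq
            rw [hq]
            exact hzVert M
        calc 2 = ({o, z} : Finset (ℤ × ℤ)).card := (Finset.card_pair hozne).symm
          _ ≤ (ψ M).card := Finset.card_le_card hpair
      · intro v hv
        have hvext := (Finset.mem_filter.1 (by rw [hψ, hvert] at hv; exact hv)).2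
        intro hcon
        exact hvext (convexHull_mono
          (Set.image_mono (Finset.coe_subset.2 (Finset.erase_subset_erase v hvsub))) hcon)
      · intro v hv hvo hvz
        rcases (hUmem M v).1 (hvsub hv) with ⟨hvS, _⟩ | rfl | rfl
        · exact (hSmem v).1 hvS
        · exact absurd rfl hvo
        · exact absurd rfl hvz
    · intro p hp
      rw [Finset.mem_filter] at hp
      obtain ⟨hpS, hpnot⟩ := hp
      by_contra hpM
      apply hpnot
      have : coe p ∈ convexHull ℝ (coe '' ((Uof M : Finset (ℤ × ℤ)) : Set (ℤ × ℤ))) :=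
        subset_convexHull ℝ _ ⟨p, Finset.mem_coe.2 ((hUmem M p).2 (Or.inl ⟨hpS, hpM⟩)), rfl⟩
      rw [hψ]
      rw [hhullvert (Uof M)]
      exact this
    · rw [Finset.disjoint_left]
      intro p hpM hpe
      have hpz : p ≠ z := (Finset.mem_erase.1 hpe).1
      have hp1 := Finset.mem_of_mem_erase hpe
      have hpo : p ≠ o := (Finset.mem_erase.1 hp1).1
      rcases (hUmem M p).1 (hvsub (Finset.mem_of_mem_erase hp1)) with ⟨_, hpM'⟩ | rfl | rfl
      · exact hpM' hpM
      · exact hpo rfl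
      · exact hpz rfl
  -- Claim B: uniqueness
  have hB : ∀ V ∈ C, ∀ M : Finset (ℤ × ℤ), M ⊆ S →
      S.filter (fun p => coe p ∉ convexHull ℝ (coe '' ((V : Finset (ℤ × ℤ)) : Set (ℤ × ℤ)))) ⊆ M →
      Disjoint M ((V.erase o).erase z) → ψ M = V := by
    intro V hV M hMS hOut hdisj
    rw [hCmem] at hV
    obtain ⟨hVIcc, hVcard, hoV, hzV, hVpos, hVint⟩ := hV
    have hVU : V ⊆ Uof M := by
      intro v hv
      rw [hUmem]
      by_cases hvo : v = o
      · exact Or.inr (Or.inl hvo)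
      by_cases hvz : v = z
      · exact Or.inr (Or.inr hvz)
      refine Or.inl ⟨(hSmem v).2 (hVint v hv hvo hvz), ?_⟩
      intro hvM
      exact (Finset.disjoint_left.1 hdisj hvM)
        (Finset.mem_erase.2 ⟨hvz, Finset.mem_erase.2 ⟨hvo, hv⟩⟩)
    have hUhullV : coe '' ((Uof M : Finset (ℤ × ℤ)) : Set (ℤ × ℤ))
        ⊆ convexHull ℝ (coe '' ((V : Finset (ℤ × ℤ)) : Set (ℤ × ℤ))) := by
      rintro w ⟨q, hq, rfl⟩
      rcases (hUmem M q).1 (Finset.mem_coe.1 hq) with ⟨hqS, hqM⟩ | rfl | rfl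
      · by_contra hcon
        exact hqM (hOut (Finset.mem_filter.2 ⟨hqS, hcon⟩))
      · exact subset_convexHull ℝ _ ⟨o, Finset.mem_coe.2 hoV, rfl⟩
      · exact subset_convexHull ℝ _ ⟨z, Finset.mem_coe.2 hzV, rfl⟩
    have hhullUV : convexHull ℝ (coe '' ((Uof M : Finset (ℤ × ℤ)) : Set (ℤ × ℤ)))
        = convexHull ℝ (coe '' ((V : Finset (ℤ × ℤ)) : Set (ℤ × ℤ))) := by
      apply Subset.antisymm
      · exact convexHull_min hUhullV (convex_convexHull ℝ _)
      · exact convexHull_mono (Set.image_mono (Finset.coe_subset.2 hVU))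
    apply Finset.Subset.antisymm
    · intro v hv
      have hv' := Finset.mem_filter.1 (by rw [hψ, hvert] at hv; exact hv)
      obtain ⟨hvU, hvext⟩ := hv'
      by_contra hvV
      apply hvext
      have hVsuberase : V ⊆ (Uof M).erase v :=
        fun u hu => Finset.mem_erase.2 ⟨fun h => hvV (h ▸ hu), hVU hu⟩
      have hmem : coe v ∈ convexHull ℝ (coe '' ((V : Finset (ℤ × ℤ)) : Set (ℤ × ℤ))) :=
        hhullUV ▸ subset_convexHull ℝ _ ⟨v, Finset.mem_coe.2 hvU, rfl⟩
      exact convexHull_mono (Set.image_mono (Finset.coe_subset.2 hVsuberase)) hmem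
    · intro v hv
      rw [hψ, hvert]
      refine Finset.mem_filter.2 ⟨hVU hv, ?_⟩
      apply aux_not_mem_hull_of_extreme
        (s := coe '' ((V : Finset (ℤ × ℤ)) : Set (ℤ × ℤ))) (x := coe v)
      · exact ⟨v, Finset.mem_coe.2 hv, rfl⟩
      · intro hcon
        apply hVpos v hv
        apply convexHull_mono ?_ hcon
        rintro w ⟨⟨u, hu, rfl⟩, hne⟩
        refine ⟨u, ?_, rfl⟩
        rw [Finset.coe_erase]
        refine ⟨hu, ?_⟩
        intro huv
        rw [mem_singleton_iff] at huv
        exact hne (mem_singleton_iff.2 (by rw [huv]))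
      · rintro w ⟨q, hq, rfl⟩
        have hqU : q ∈ Uof M := Finset.mem_of_mem_erase (Finset.mem_coe.1 hq)
        exact hhullUV ▸ subset_convexHull ℝ _ ⟨q, Finset.mem_coe.2 hqU, rfl⟩
      · rintro ⟨u, hu, heq⟩
        have huv : u = v := hinj heq
        rw [huv] at hu
        exact (Finset.mem_erase.1 (Finset.mem_coe.1 hu)).1 rfl
  -- now fix x and compute the sum
  intro x
  -- rewrite the exponent as a Finset card
  have hu : ∀ V : Finset (ℤ × ℤ),
      {p : ℤ × ℤ | coe p ∈ interior Δ ∧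
        coe p ∉ convexHull ℝ (coe '' ((V : Finset (ℤ × ℤ)) : Set (ℤ × ℤ)))}.ncard
      = (S.filter (fun p =>
          coe p ∉ convexHull ℝ (coe '' ((V : Finset (ℤ × ℤ)) : Set (ℤ × ℤ))))).card := by
    intro V
    rw [← Set.ncard_coe_finset]
    congr 1
    ext p
    simp only [mem_setOf_eq, Finset.coe_filter, hIntChar p]
  -- per-term expansion over compatible markings
  have hterm : ∀ V ∈ C,
      x ^ (S.filter (fun p =>
            coe p ∉ convexHull ℝ (coe '' ((V : Finset (ℤ × ℤ)) : Set (ℤ × ℤ))))).card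
        * (1 - x) ^ (V.card - 2)
      = ∑ M ∈ S.powerset.filter (fun M =>
            S.filter (fun p =>
              coe p ∉ convexHull ℝ (coe '' ((V : Finset (ℤ × ℤ)) : Set (ℤ × ℤ)))) ⊆ M ∧
            Disjoint M ((V.erase o).erase z)),
          x ^ M.card * (1 - x) ^ (S.card - M.card) := by
    intro V hV
    rw [hCmem] at hV
    obtain ⟨hVIcc, hVcard, hoV, hzV, hVpos, hVint⟩ := hV
    set Out : Finset (ℤ × ℤ) := S.filter (fun p =>
      coe p ∉ convexHull ℝ (coe '' ((V : Finset (ℤ × ℤ)) : Set (ℤ × ℤ)))) with hOutdef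
    set In : Finset (ℤ × ℤ) := S.filter (fun p =>
      coe p ∈ convexHull ℝ (coe '' ((V : Finset (ℤ × ℤ)) : Set (ℤ × ℤ)))) with hIndef
    set Vi : Finset (ℤ × ℤ) := (V.erase o).erase z with hVidef
    have hViIn : Vi ⊆ In := by
      intro v hv
      have hvz := (Finset.mem_erase.1 hv).1
      have hv1 := Finset.mem_of_mem_erase hv
      have hvo := (Finset.mem_erase.1 hv1).1
      have hvV := Finset.mem_of_mem_erase hv1
      exact Finset.mem_filter.2 ⟨(hSmem v).2 (hVint v hvV hvo hvz),
        subset_convexHull ℝ _ ⟨v, Finset.mem_coe.2 hvV, rfl⟩⟩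
    set F : Finset (ℤ × ℤ) := In \ Vi with hFdef
    have hVicard : Vi.card = V.card - 2 := by
      rw [hVidef, Finset.card_erase_of_mem
        (Finset.mem_erase.2 ⟨fun h => hozne h.symm, hzV⟩), Finset.card_erase_of_mem hoV]
      omega
    have hIncard : In.card = F.card + (V.card - 2) := by
      have h1 : F.card = In.card - Vi.card := Finset.card_sdiff_of_subset hViIn
      have h2 : Vi.card ≤ In.card := Finset.card_le_card hViIn
      omega
    have hScard : S.card = Out.card + In.card := by
      have h1 := Finset.card_filter_add_card_filter_not (s := S) (p := fun p =>
        coe p ∉ convexHull ℝ (coe '' ((V : Finset (ℤ × ℤ)) : Set (ℤ × ℤ))))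
      have h2 : S.filter (fun p => ¬ coe p ∉ convexHull ℝ
          (coe '' ((V : Finset (ℤ × ℤ)) : Set (ℤ × ℤ)))) = In := by
        apply Finset.filter_congr
        intro p _
        exact not_not
      rw [h2, ← hOutdef] at h1
      omega
    have hdisjOutIn : Disjoint Out In := by
      rw [Finset.disjoint_left]
      intro p hp1 hp2
      exact (Finset.mem_filter.1 hp1).2 (Finset.mem_filter.1 hp2).2
    have hbij : ∑ M ∈ S.powerset.filter (fun M => Out ⊆ M ∧ Disjoint M Vi),
          x ^ M.card * (1 - x) ^ (S.card - M.card)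
        = ∑ W ∈ F.powerset,
          x ^ (Out.card + W.card) * (1 - x) ^ ((F.card - W.card) + (V.card - 2)) := by
      apply Finset.sum_nbij' (i := fun M => M \ Out) (j := fun W => Out ∪ W)
      · intro M hM
        rw [Finset.mem_filter, Finset.mem_powerset] at hM
        obtain ⟨hMS, hOutM, hMVi⟩ := hM
        rw [Finset.mem_powerset]
        intro p hp
        rw [Finset.mem_sdiff] at hp
        obtain ⟨hpM, hpOut⟩ := hp
        have hpS : p ∈ S := hMS hpM
        have hpIn : p ∈ In := by
          refine Finset.mem_filter.2 ⟨hpS, ?_⟩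
          by_contra hcon
          exact hpOut (Finset.mem_filter.2 ⟨hpS, hcon⟩)
        rw [hFdef, Finset.mem_sdiff]
        exact ⟨hpIn, fun hpVi => (Finset.disjoint_left.1 hMVi hpM) hpVi⟩
      · intro W hW
        rw [Finset.mem_powerset] at hW
        rw [Finset.mem_filter, Finset.mem_powerset]
        have hWIn : W ⊆ In := fun p hp => (Finset.mem_sdiff.1 (hW hp)).1
        refine ⟨?_, Finset.subset_union_left, ?_⟩
        · intro p hp
          rcases Finset.mem_union.1 hp with h | h
          · exact (Finset.filter_subset _ _) h
          · exact (Finset.filter_subset _ _) (hWIn h)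
        · rw [Finset.disjoint_left]
          intro p hp hpVi
          rcases Finset.mem_union.1 hp with h | h
          · exact (Finset.disjoint_left.1 hdisjOutIn h) (hViIn hpVi)
          · exact (Finset.mem_sdiff.1 (hW h)).2 hpVi
      · intro M hM
        rw [Finset.mem_filter, Finset.mem_powerset] at hM
        exact Finset.union_sdiff_of_subset hM.2.1
      · intro W hW
        rw [Finset.mem_powerset] at hW
        have hWIn : W ⊆ In := fun p hp => (Finset.mem_sdiff.1 (hW hp)).1
        have hdisj : Disjoint Out W := hdisjOutIn.mono_right hWIn
        rw [Finset.union_sdiff_cancel_left hdisj]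
      · intro M hM
        rw [Finset.mem_filter, Finset.mem_powerset] at hM
        obtain ⟨hMS, hOutM, hMVi⟩ := hM
        have hcard : (M \ Out).card = M.card - Out.card := Finset.card_sdiff_of_subset hOutM
        have hle : Out.card ≤ M.card := Finset.card_le_card hOutM
        have hMle : M.card ≤ S.card := Finset.card_le_card hMS
        have hMF : M \ Out ⊆ F := by
          intro p hp
          rw [Finset.mem_sdiff] at hp
          obtain ⟨hpM, hpOut⟩ := hp
          have hpS : p ∈ S := hMS hpM
          have hpIn : p ∈ In := by
            refine Finset.mem_filter.2 ⟨hpS, ?_⟩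
            by_contra hcon
            exact hpOut (Finset.mem_filter.2 ⟨hpS, hcon⟩)
          rw [hFdef, Finset.mem_sdiff]
          exact ⟨hpIn, fun hpVi => (Finset.disjoint_left.1 hMVi hpM) hpVi⟩
        have hcardle : (M \ Out).card ≤ F.card := Finset.card_le_card hMF
        congr 1
        · congr 1
          omega
        · congr 1
          omega
    rw [hbij]
    have hstep : ∀ W ∈ F.powerset,
        x ^ (Out.card + W.card) * (1 - x) ^ ((F.card - W.card) + (V.card - 2))
        = (x ^ Out.card * (1 - x) ^ (V.card - 2)) * (x ^ W.card * (1 - x) ^ (F.card - W.card)) := by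
      intro W _
      rw [pow_add, pow_add]
      ring
    rw [Finset.sum_congr rfl hstep, ← Finset.mul_sum, aux_binomial F x, mul_one]
  -- fibers of ψ over C are exactly the compatible markings
  have hfiber : ∀ V ∈ C,
      S.powerset.filter (fun M =>
        S.filter (fun p =>
          coe p ∉ convexHull ℝ (coe '' ((V : Finset (ℤ × ℤ)) : Set (ℤ × ℤ)))) ⊆ M ∧
        Disjoint M ((V.erase o).erase z))
      = S.powerset.filter (fun M => ψ M = V) := by
    intro V hV
    ext M
    simp only [Finset.mem_filter, Finset.mem_powerset]
    constructor
    · rintro ⟨hMS, h1, h2⟩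
      exact ⟨hMS, hB V hV M hMS h1 h2⟩
    · rintro ⟨hMS, hψM⟩
      obtain ⟨_, h1, h2⟩ := hA M hMS
      rw [hψM] at h1 h2
      exact ⟨hMS, h1, h2⟩
  calc ∑ V ∈ C, x ^ ({p : ℤ × ℤ | coe p ∈ interior Δ ∧
          coe p ∉ convexHull ℝ (coe '' ((V : Finset (ℤ × ℤ)) : Set (ℤ × ℤ)))}.ncard)
        * (1 - x) ^ (V.card - 2)
      = ∑ V ∈ C, ∑ M ∈ S.powerset.filter (fun M => ψ M = V),
          x ^ M.card * (1 - x) ^ (S.card - M.card) := by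
        apply Finset.sum_congr rfl
        intro V hV
        rw [hu V, hterm V hV, hfiber V hV]
    _ = ∑ M ∈ S.powerset, x ^ M.card * (1 - x) ^ (S.card - M.card) :=
        Finset.sum_fiberwise_of_maps_to
          (fun M hM => (hA M (Finset.mem_powerset.1 hM)).1) _
    _ = 1 := aux_binomial S x
end

section
/- With Δ, L, C, u, v as above (triangle with vertices (0,0),(i,0),(i,j), segment L from (0,0) to (i,j), C the set of admissible convex polygons): for every real number 0 < x < 1, if each lattice point interior to Δ is independently selected with probability x, and P is the convex hull of the selected points together with (0,0) and (i,j), then P lies in C, and the probability that the resulting convex hull equals a given Q ∈ C is exactly x^{v(Q)−2} (1−x)^{u(Q)}. -/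
open scoped Classical

lemma aux_extreme {E : Type*} [AddCommGroup E] [Module ℝ E] {A : Set E} {x : E}
    (hxA : x ∈ A) (hx : x ∉ convexHull ℝ (A \ {x})) :
    x ∈ (convexHull ℝ A).extremePoints ℝ := by
  rw [mem_extremePoints_iff_forall_segment]
  refine ⟨subset_convexHull ℝ A hxA, fun y hy z hz hseg => ?_⟩
  rcases Set.eq_empty_or_nonempty (A \ {x}) with hA | hA
  · have hAx : A = {x} := by
      apply Set.Subset.antisymm
      · intro a ha
        by_contra h
        exact Set.eq_empty_iff_forall_notMem.1 hA a ⟨ha, h⟩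
      · simpa using hxA
    rw [hAx, convexHull_singleton] at hy
    exact Or.inl hy
  · have hA' : A = insert x (A \ {x}) := by
      rw [Set.insert_diff_singleton, Set.insert_eq_self.2 hxA]
    rw [hA', convexHull_insert hA, mem_convexJoin] at hy hz
    obtain ⟨x₁, hx₁, y', hy', hy⟩ := hy
    obtain ⟨x₂, hx₂, z', hz', hz⟩ := hz
    rw [Set.mem_singleton_iff] at hx₁ hx₂
    rw [hx₁] at hy; rw [hx₂] at hz
    obtain ⟨a₁, a₂, ha₁, ha₂, ha, hy⟩ := hy
    obtain ⟨b₁, b₂, hb₁, hb₂, hb, hz⟩ := hz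
    obtain ⟨t, s, ht, hs, hts, hseg⟩ := hseg
    set c := t * a₂ + s * b₂ with hc
    have hc0 : 0 ≤ c := by positivity
    rcases eq_or_lt_of_le hc0 with hc0' | hc0'
    · have h1 : t * a₂ = 0 := by nlinarith
      have h2 : s * b₂ = 0 := by nlinarith
      rcases eq_or_lt_of_le ht with ht0 | ht0
      · right
        have hs1 : s = 1 := by linarith
        have hb₂0 : b₂ = 0 := by nlinarith
        have hb₁1 : b₁ = 1 := by linarith
        rw [← hz, hb₁1, hb₂0]; simp
      · left
        have ha₂0 : a₂ = 0 := by nlinarith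
        have ha₁1 : a₁ = 1 := by linarith
        rw [← hy, ha₁1, ha₂0]; simp
    · exfalso
      apply hx
      have H : t • (a₁ • x + a₂ • y') + s • (b₁ • x + b₂ • z') = x := by
        rw [hy, hz]; exact hseg
      have hscalar : c = 1 - t * a₁ - s * b₁ := by linear_combination t * ha + s * hb + hts
      have hvec : c • x = (t * a₂) • y' + (s * b₂) • z' := by
        rw [hscalar]
        linear_combination (norm := module) -H
      have hxeq : (t * a₂ / c) • y' + (s * b₂ / c) • z' = x := by
        have h3 := congrArg (fun w => (c⁻¹ : ℝ) • w) hvec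
        simp only [smul_add, smul_smul] at h3
        rw [inv_mul_cancel₀ (ne_of_gt hc0'), one_smul] at h3
        rw [div_eq_inv_mul, div_eq_inv_mul]
        exact h3.symm
      have hsum : t * a₂ / c + s * b₂ / c = 1 := by
        rw [← add_div, ← hc]
        exact div_self (ne_of_gt hc0')
      exact hxeq ▸ ((convex_convexHull ℝ (A \ {x})) hy' hz'
        (div_nonneg (by positivity) hc0) (div_nonneg (by positivity) hc0) hsum)

lemma aux_hull_filter (f : ℤ×ℤ → ℝ×ℝ) (hf : Function.Injective f) (S : Finset (ℤ×ℤ)) :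
    convexHull ℝ (f '' ↑(S.filter (fun v => f v ∉ convexHull ℝ (f '' ↑(S.erase v)))))
      = convexHull ℝ (f '' ↑S) := by
  apply Set.Subset.antisymm
  · exact convexHull_mono (Set.image_mono (by exact_mod_cast S.filter_subset _))
  · set A : Set (ℝ×ℝ) := f '' ↑S with hA
    have hfin : A.Finite := S.finite_toSet.image f
    have hcomp : IsCompact (convexHull ℝ A) := hfin.isCompact_convexHull ℝ
    have hKM := closure_convexHull_extremePoints hcomp (convex_convexHull ℝ A)
    have hsub : (convexHull ℝ A).extremePoints ℝ ⊆
        f '' ↑(S.filter (fun v => f v ∉ convexHull ℝ (f '' ↑(S.erase v)))) := by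
      intro p hp
      have hpA : p ∈ A := extremePoints_convexHull_subset hp
      obtain ⟨v, hvS, rfl⟩ := hpA
      refine ⟨v, ?_, rfl⟩
      rw [Finset.mem_coe, Finset.mem_filter]
      refine ⟨hvS, ?_⟩
      have hp2 := ((convex_convexHull ℝ A).mem_extremePoints_iff_mem_diff_convexHull_diff.1 hp).2
      intro hmem
      apply hp2
      refine convexHull_mono ?_ hmem
      rintro q ⟨w, hw, rfl⟩
      rw [Finset.mem_coe, Finset.mem_erase] at hw
      exact ⟨subset_convexHull ℝ A ⟨w, hw.2, rfl⟩, fun h => hw.1 (hf h)⟩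
    calc convexHull ℝ A
        = closure (convexHull ℝ ((convexHull ℝ A).extremePoints ℝ)) := hKM.symm
      _ ⊆ closure (convexHull ℝ (f '' ↑(S.filter (fun v => f v ∉ convexHull ℝ (f '' ↑(S.erase v)))))) :=
          closure_mono (convexHull_mono hsub)
      _ = _ := (((S.filter _).finite_toSet.image f).isClosed_convexHull ℝ).closure_eq

lemma aux_tri (i j : ℕ) (hi : 0 < i) (hj : 0 < j) :
    convexHull ℝ {((0:ℝ),(0:ℝ)), ((i:ℝ),(0:ℝ)), ((i:ℝ),(j:ℝ))}
      = {p : ℝ × ℝ | 0 ≤ p.2 ∧ p.1 ≤ i ∧ (i:ℝ) * p.2 ≤ j * p.1} := by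
  have hi' : (0:ℝ) < i := by exact_mod_cast hi
  have hj' : (0:ℝ) < j := by exact_mod_cast hj
  apply Set.Subset.antisymm
  · apply convexHull_min
    · rintro p (rfl | rfl | rfl) <;> refine ⟨?_, ?_, ?_⟩ <;> norm_num <;> nlinarith
    · rintro p ⟨hp1, hp2, hp3⟩ q ⟨hq1, hq2, hq3⟩ a b ha hb hab
      refine ⟨?_, ?_, ?_⟩ <;>
        simp only [Prod.fst_add, Prod.snd_add, Prod.smul_fst, Prod.smul_snd, smul_eq_mul] <;>
        nlinarith
  · rintro p ⟨h1, h2, h3⟩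
    have h0 : 0 ≤ p.1 := by nlinarith
    set w : Fin 3 → ℝ := ![1 - p.1 / i, p.1 / i - p.2 / j, p.2 / j] with hw
    set z : Fin 3 → ℝ×ℝ := ![((0:ℝ),(0:ℝ)), ((i:ℝ),(0:ℝ)), ((i:ℝ),(j:ℝ))] with hz
    have hwnn : ∀ k ∈ Finset.univ, 0 ≤ w k := by
      intro k _
      fin_cases k
      · simp only [hw]
        show (0:ℝ) ≤ 1 - p.1 / i
        rw [sub_nonneg, div_le_one hi']
        exact h2
      · show (0:ℝ) ≤ p.1 / i - p.2 / j
        rw [sub_nonneg, div_le_div_iff₀ hj' hi']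
        nlinarith
      · show (0:ℝ) ≤ p.2 / j
        positivity
    have hsum : ∑ k, w k = 1 := by
      rw [Fin.sum_univ_three]
      show (1 - p.1/(i:ℝ)) + (p.1/(i:ℝ) - p.2/(j:ℝ)) + p.2/(j:ℝ) = 1
      ring
    have hzm : ∀ k ∈ Finset.univ, z k ∈
        ({((0:ℝ),(0:ℝ)), ((i:ℝ),(0:ℝ)), ((i:ℝ),(j:ℝ))} : Set (ℝ×ℝ)) := by
      intro k _; fin_cases k <;> simp [hz]
    have hmem := Finset.centerMass_mem_convexHull Finset.univ hwnn (by rw [hsum]; norm_num) hzm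
    have heq : Finset.univ.centerMass w z = p := by
      rw [Finset.centerMass_eq_of_sum_1 _ _ hsum, Fin.sum_univ_three]
      show w 0 • ((0:ℝ),(0:ℝ)) + w 1 • ((i:ℝ),(0:ℝ)) + w 2 • ((i:ℝ),(j:ℝ)) = p
      have : w 1 = p.1 / i - p.2 / j := rfl
      have : w 2 = p.2 / j := rfl
      apply Prod.ext
      · show w 0 * 0 + w 1 * i + w 2 * i = p.1
        show (1 - p.1 / i) * 0 + (p.1 / i - p.2 / j) * i + p.2 / j * i = p.1
        field_simp
        ring
      · show w 0 * 0 + w 1 * 0 + w 2 * j = p.2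
        show (1 - p.1 / i) * 0 + (p.1 / i - p.2 / j) * 0 + p.2 / j * j = p.2
        field_simp
        ring
    rwa [heq] at hmem

lemma aux_tri_int (i j : ℕ) (hi : 0 < i) (hj : 0 < j) :
    interior (convexHull ℝ {((0:ℝ),(0:ℝ)), ((i:ℝ),(0:ℝ)), ((i:ℝ),(j:ℝ))})
      = {p : ℝ × ℝ | 0 < p.2 ∧ p.1 < i ∧ (i:ℝ) * p.2 < j * p.1} := by
  have hi' : (0:ℝ) < i := by exact_mod_cast hi
  have hj' : (0:ℝ) < j := by exact_mod_cast hj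
  rw [aux_tri i j hi hj]
  apply Set.Subset.antisymm
  · intro p hp
    obtain ⟨ε, hε, hball⟩ := Metric.mem_nhds_iff.1 (mem_interior_iff_mem_nhds.1 hp)
    have key : ∀ a b : ℝ, |a - p.1| < ε → |b - p.2| < ε →
        0 ≤ b ∧ a ≤ i ∧ (i:ℝ) * b ≤ j * a := by
      intro a b h1 h2
      exact hball (show (a, b) ∈ Metric.ball p ε by
        rw [Metric.mem_ball, Prod.dist_eq, max_lt_iff]
        exact ⟨by rwa [Real.dist_eq], by rwa [Real.dist_eq]⟩)
    have k1 := key p.1 (p.2 - ε/2) (by simpa using hε)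
      (by rw [show p.2 - ε/2 - p.2 = -(ε/2) by ring, abs_neg, abs_of_pos (by linarith)]; linarith)
    have k2 := key (p.1 + ε/2) p.2
      (by rw [show p.1 + ε/2 - p.1 = ε/2 by ring, abs_of_pos (by linarith)]; linarith)
      (by simpa using hε)
    have k3 := key p.1 (p.2 + ε/2) (by simpa using hε)
      (by rw [show p.2 + ε/2 - p.2 = ε/2 by ring, abs_of_pos (by linarith)]; linarith)
    refine ⟨by linarith [k1.1], by linarith [k2.2.1], ?_⟩
    have := k3.2.2
    nlinarith
  · apply interior_maximal
    · rintro p ⟨h1, h2, h3⟩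
      exact ⟨h1.le, h2.le, h3.le⟩
    · have : {p : ℝ × ℝ | 0 < p.2 ∧ p.1 < i ∧ (i:ℝ) * p.2 < j * p.1}
          = {p : ℝ × ℝ | 0 < p.2} ∩ ({p : ℝ × ℝ | p.1 < i} ∩ {p : ℝ × ℝ | (i:ℝ) * p.2 < j * p.1}) := by
        ext p; simp [Set.mem_setOf_eq, and_assoc]
      rw [this]
      exact (isOpen_lt continuous_const continuous_snd).inter
        ((isOpen_lt continuous_fst continuous_const).inter
          (isOpen_lt (continuous_const.mul continuous_snd) (continuous_const.mul continuous_fst)))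

lemma aux_binom (x : ℝ) (M : Finset (ℤ × ℤ)) :
    ∑ S ∈ M.powerset, x ^ S.card * (1 - x) ^ (M.card - S.card) = 1 := by
  have h := Finset.prod_add (fun _ : ℤ × ℤ => x) (fun _ : ℤ × ℤ => 1 - x) M
  simp only [add_sub_cancel, Finset.prod_const, Finset.prod_const_one, one_pow] at h
  refine Eq.trans ?_ h.symm
  apply Finset.sum_congr rfl
  intro S hS
  rw [Finset.card_sdiff_of_subset (Finset.mem_powerset.1 hS)]

lemma aux_halfplane_lt (a b r : ℝ) : Convex ℝ {p : ℝ×ℝ | a * p.1 + b * p.2 < r} := by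
  have hlin : IsLinearMap ℝ (fun p : ℝ×ℝ => a * p.1 + b * p.2) :=
    ⟨fun p q => by simp only [Prod.fst_add, Prod.snd_add]; ring,
     fun c p => by simp only [Prod.smul_fst, Prod.smul_snd, smul_eq_mul]; ring⟩
  exact convex_halfSpace_lt hlin r

lemma aux_halfplane_gt (a b r : ℝ) : Convex ℝ {p : ℝ×ℝ | r < a * p.1 + b * p.2} := by
  have hlin : IsLinearMap ℝ (fun p : ℝ×ℝ => a * p.1 + b * p.2) :=
    ⟨fun p q => by simp only [Prod.fst_add, Prod.snd_add]; ring,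
     fun c p => by simp only [Prod.smul_fst, Prod.smul_snd, smul_eq_mul]; ring⟩
  exact convex_halfSpace_gt hlin r

/-- Probabilistic process: each lattice point interior to `Δ` is independently selected with
probability `x ∈ (0,1)`; the convex hull of the selected points together with `(0,0)` and `(i,j)`
is (the region of) an element of `C`, and for a given `Q ∈ C` the probability that the hull
equals `Q` is exactly `x^{v(Q)−2} (1−x)^{u(Q)}`.  Probabilities of events are expressed as sums
over the selected subsets `T` of the weight `x^{|T|}(1−x)^{|I|−|T|}`. -/
theorem stmt10 (i j : ℕ) (hi : 0 < i) (hj : 0 < j)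
    (coe : ℤ × ℤ → ℝ × ℝ) (hcoe : coe = fun p => ((p.1 : ℝ), (p.2 : ℝ)))
    (Δ : Set (ℝ × ℝ))
    (hΔ : Δ = convexHull ℝ {((0 : ℝ), (0 : ℝ)), ((i : ℝ), (0 : ℝ)), ((i : ℝ), (j : ℝ))})
    (C : Finset (Finset (ℤ × ℤ)))
    (hC : C = (Finset.Icc ((0 : ℤ), (0 : ℤ)) ((i : ℤ), (j : ℤ))).powerset.filter (fun V =>
      2 ≤ V.card ∧ ((0, 0) : ℤ × ℤ) ∈ V ∧ ((i : ℤ), (j : ℤ)) ∈ V ∧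
      (∀ v ∈ V, coe v ∉ convexHull ℝ (coe '' ((V.erase v : Finset (ℤ × ℤ)) : Set (ℤ × ℤ)))) ∧
      (∀ v ∈ V, v ≠ ((0, 0) : ℤ × ℤ) → v ≠ ((i : ℤ), (j : ℤ)) →
        0 < v.2 ∧ v.1 < (i : ℤ) ∧ (i : ℤ) * v.2 < (j : ℤ) * v.1)))
    (I : Finset (ℤ × ℤ))
    (hI : I = (Finset.Icc ((0 : ℤ), (0 : ℤ)) ((i : ℤ), (j : ℤ))).filter
      (fun p => coe p ∈ interior Δ)) :
    ∀ x : ℝ, 0 < x → x < 1 →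
      (∀ T ∈ I.powerset, ∃ V ∈ C,
        convexHull ℝ (coe '' ((insert ((0 : ℤ), (0 : ℤ)) (insert ((i : ℤ), (j : ℤ)) T)
            : Finset (ℤ × ℤ)) : Set (ℤ × ℤ)))
          = convexHull ℝ (coe '' ((V : Finset (ℤ × ℤ)) : Set (ℤ × ℤ)))) ∧
      (∀ Q ∈ C,
        (∑ T ∈ I.powerset.filter (fun T =>
            convexHull ℝ (coe '' ((insert ((0 : ℤ), (0 : ℤ)) (insert ((i : ℤ), (j : ℤ)) T)
                : Finset (ℤ × ℤ)) : Set (ℤ × ℤ)))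
              = convexHull ℝ (coe '' ((Q : Finset (ℤ × ℤ)) : Set (ℤ × ℤ)))),
          x ^ T.card * (1 - x) ^ (I.card - T.card))
        = x ^ (Q.card - 2) *
            (1 - x) ^ ((I.filter (fun p =>
              coe p ∉ convexHull ℝ (coe '' ((Q : Finset (ℤ × ℤ)) : Set (ℤ × ℤ))))).card)) := by
  intro x hx0 hx1
  -- basic facts
  have hi' : (0:ℝ) < i := by exact_mod_cast hi
  have hj' : (0:ℝ) < j := by exact_mod_cast hj
  have hiz : (0:ℤ) < (i:ℤ) := by exact_mod_cast hi
  have hjz : (0:ℤ) < (j:ℤ) := by exact_mod_cast hj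
  have hf : Function.Injective coe := by
    rw [hcoe]
    intro p q h
    have h1 : ((p.1:ℝ), (p.2:ℝ)) = ((q.1:ℝ), (q.2:ℝ)) := h
    rw [Prod.mk.injEq] at h1
    exact Prod.ext (by exact_mod_cast h1.1) (by exact_mod_cast h1.2)
  have hne : ((0:ℤ),(0:ℤ)) ≠ ((i:ℤ),(j:ℤ)) := by
    intro h
    rw [Prod.mk.injEq] at h
    omega
  have hint : interior Δ = {p : ℝ×ℝ | 0 < p.2 ∧ p.1 < i ∧ (i:ℝ)*p.2 < j*p.1} := by
    rw [hΔ]; exact aux_tri_int i j hi hj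
  have hIiff : ∀ p : ℤ × ℤ, p ∈ I ↔ 0 < p.2 ∧ p.1 < (i:ℤ) ∧ (i:ℤ)*p.2 < (j:ℤ)*p.1 := by
    intro p
    rw [hI, Finset.mem_filter, Finset.mem_Icc, hint, hcoe]
    simp only [Set.mem_setOf_eq, Prod.le_def]
    constructor
    · rintro ⟨-, h1, h2, h3⟩
      exact ⟨by exact_mod_cast h1, by exact_mod_cast h2, by exact_mod_cast h3⟩
    · rintro ⟨h1, h2, h3⟩
      have hp1 : 0 < p.1 := by nlinarith
      have hp2 : p.2 < j := by nlinarith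
      refine ⟨⟨⟨hp1.le, h1.le⟩, h2.le, hp2.le⟩, ?_, ?_, ?_⟩
      · exact_mod_cast h1
      · exact_mod_cast h2
      · exact_mod_cast h3
  have hIfacts : ∀ p ∈ I, 0 < p.2 ∧ p.1 < (i:ℤ) ∧ (i:ℤ)*p.2 < (j:ℤ)*p.1 ∧ 0 < p.1 ∧ p.2 < (j:ℤ) := by
    intro p hp
    obtain ⟨h1, h2, h3⟩ := (hIiff p).1 hp
    exact ⟨h1, h2, h3, by nlinarith, by nlinarith⟩
  have hIcc0 : ((0:ℤ),(0:ℤ)) ∈ Finset.Icc ((0:ℤ),(0:ℤ)) ((i:ℤ),(j:ℤ)) := by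
    rw [Finset.mem_Icc]
    exact ⟨le_refl _, by rw [Prod.le_def]; exact ⟨hiz.le, hjz.le⟩⟩
  have hIccij : ((i:ℤ),(j:ℤ)) ∈ Finset.Icc ((0:ℤ),(0:ℤ)) ((i:ℤ),(j:ℤ)) := by
    rw [Finset.mem_Icc]
    exact ⟨by rw [Prod.le_def]; exact ⟨hiz.le, hjz.le⟩, le_refl _⟩
  have hIIcc : I ⊆ Finset.Icc ((0:ℤ),(0:ℤ)) ((i:ℤ),(j:ℤ)) := by
    rw [hI]; exact Finset.filter_subset _ _
  -- separation lemmas for the corner points, for any T ⊆ I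
  have hsep0 : ∀ T : Finset (ℤ × ℤ), T ⊆ I →
      coe ((0:ℤ),(0:ℤ)) ∉ convexHull ℝ
        (coe '' ↑((insert ((0:ℤ),(0:ℤ)) (insert ((i:ℤ),(j:ℤ)) T)).erase ((0:ℤ),(0:ℤ)))) := by
    intro T hTI hmem
    have hsub : coe '' ↑((insert ((0:ℤ),(0:ℤ)) (insert ((i:ℤ),(j:ℤ)) T)).erase ((0:ℤ),(0:ℤ)))
        ⊆ {p : ℝ×ℝ | 0 < 1 * p.1 + 0 * p.2} := by
      rintro _ ⟨w, hw, rfl⟩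
      rw [Finset.mem_coe, Finset.mem_erase, Finset.mem_insert, Finset.mem_insert] at hw
      obtain ⟨hwne, hwS⟩ := hw
      rw [hcoe]
      simp only [Set.mem_setOf_eq, one_mul, zero_mul, add_zero]
      rcases hwS with rfl | rfl | hwT
      · exact absurd rfl hwne
      · simpa using hi'
      · have := (hIfacts w (hTI hwT)).2.2.2.1
        simpa using (by exact_mod_cast this : (0:ℝ) < (w.1:ℝ))
    have h2 := convexHull_min hsub (aux_halfplane_gt 1 0 0) hmem
    rw [hcoe] at h2
    simp at h2
  have hsepij : ∀ T : Finset (ℤ × ℤ), T ⊆ I →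
      coe ((i:ℤ),(j:ℤ)) ∉ convexHull ℝ
        (coe '' ↑((insert ((0:ℤ),(0:ℤ)) (insert ((i:ℤ),(j:ℤ)) T)).erase ((i:ℤ),(j:ℤ)))) := by
    intro T hTI hmem
    have hsub : coe '' ↑((insert ((0:ℤ),(0:ℤ)) (insert ((i:ℤ),(j:ℤ)) T)).erase ((i:ℤ),(j:ℤ)))
        ⊆ {p : ℝ×ℝ | 1 * p.1 + 1 * p.2 < i + j} := by
      rintro _ ⟨w, hw, rfl⟩
      rw [Finset.mem_coe, Finset.mem_erase, Finset.mem_insert, Finset.mem_insert] at hw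
      obtain ⟨hwne, hwS⟩ := hw
      rw [hcoe]
      simp only [Set.mem_setOf_eq, one_mul]
      rcases hwS with rfl | rfl | hwT
      · norm_num
        linarith
      · exact absurd rfl hwne
      · obtain ⟨-, hw2, -, -, hw5⟩ := hIfacts w (hTI hwT)
        have c2 : (w.1:ℝ) < i := by exact_mod_cast hw2
        have c5 : (w.2:ℝ) < j := by exact_mod_cast hw5
        linarith
    have h2 := convexHull_min hsub (aux_halfplane_lt 1 1 ((i:ℝ)+(j:ℝ))) hmem
    rw [hcoe] at h2
    simp at h2
  constructor
  · -- part 1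
    intro T hT
    have hTI : T ⊆ I := Finset.mem_powerset.1 hT
    set S : Finset (ℤ×ℤ) := insert ((0:ℤ),(0:ℤ)) (insert ((i:ℤ),(j:ℤ)) T) with hSdef
    set V : Finset (ℤ×ℤ) := S.filter (fun v => coe v ∉ convexHull ℝ (coe '' ↑(S.erase v)))
      with hVdef
    have hSIcc : S ⊆ Finset.Icc ((0:ℤ),(0:ℤ)) ((i:ℤ),(j:ℤ)) := by
      intro w hw
      rw [hSdef, Finset.mem_insert, Finset.mem_insert] at hw
      rcases hw with rfl | rfl | hwT
      · exact hIcc0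
      · exact hIccij
      · exact hIIcc (hTI hwT)
    have h0V : ((0:ℤ),(0:ℤ)) ∈ V := by
      rw [hVdef, Finset.mem_filter]
      exact ⟨Finset.mem_insert_self _ _, hsep0 T hTI⟩
    have hijV : ((i:ℤ),(j:ℤ)) ∈ V := by
      rw [hVdef, Finset.mem_filter]
      exact ⟨Finset.mem_insert_of_mem (Finset.mem_insert_self _ _), hsepij T hTI⟩
    refine ⟨V, ?_, (aux_hull_filter coe hf S).symm⟩
    rw [hC, Finset.mem_filter, Finset.mem_powerset]
    refine ⟨(Finset.filter_subset _ _).trans hSIcc, ?_, h0V, hijV, ?_, ?_⟩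
    · -- card
      have hsub : ({((0:ℤ),(0:ℤ)), ((i:ℤ),(j:ℤ))} : Finset (ℤ×ℤ)) ⊆ V := by
        intro w hw
        rw [Finset.mem_insert, Finset.mem_singleton] at hw
        rcases hw with rfl | rfl
        · exact h0V
        · exact hijV
      calc 2 = ({((0:ℤ),(0:ℤ)), ((i:ℤ),(j:ℤ))} : Finset (ℤ×ℤ)).card := by
                rw [Finset.card_insert_of_notMem (by simpa using hne), Finset.card_singleton]
        _ ≤ V.card := Finset.card_le_card hsub
    · -- vertex condition
      intro v hv
      rw [hVdef, Finset.mem_filter] at hv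
      intro hmem
      apply hv.2
      refine convexHull_mono (Set.image_mono ?_) hmem
      exact_mod_cast Finset.erase_subset_erase v (Finset.filter_subset _ _)
    · -- strictness condition
      intro v hv hv0 hvij
      rw [hVdef, Finset.mem_filter] at hv
      have hvS := hv.1
      rw [hSdef, Finset.mem_insert, Finset.mem_insert] at hvS
      rcases hvS with rfl | rfl | hvT
      · exact absurd rfl hv0
      · exact absurd rfl hvij
      · exact (hIiff v).1 (hTI hvT)
  · -- part 2
    intro Q hQ
    rw [hC, Finset.mem_filter, Finset.mem_powerset] at hQ
    obtain ⟨hQIcc, ⟨hQcard, hQ0, hQij, hQvert, hQstrict⟩⟩ := hQ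
    set Q2 : Finset (ℤ×ℤ) := (Q.erase ((0:ℤ),(0:ℤ))).erase ((i:ℤ),(j:ℤ)) with hQ2def
    set Out : Finset (ℤ×ℤ) := I.filter
      (fun p => coe p ∉ convexHull ℝ (coe '' (Q : Set (ℤ×ℤ)))) with hOutdef
    set Mid : Finset (ℤ×ℤ) := (I \ Out) \ Q2 with hMiddef
    have hQ2mem : ∀ q, q ∈ Q2 ↔ q ∈ Q ∧ q ≠ ((0:ℤ),(0:ℤ)) ∧ q ≠ ((i:ℤ),(j:ℤ)) := by
      intro q
      rw [hQ2def, Finset.mem_erase, Finset.mem_erase]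
      tauto
    have hQ2I : Q2 ⊆ I := by
      intro q hq
      obtain ⟨hqQ, hq0, hqij⟩ := (hQ2mem q).1 hq
      exact (hIiff q).2 (hQstrict q hqQ hq0 hqij)
    have hQhull : ∀ q ∈ Q, coe q ∈ convexHull ℝ (coe '' (Q : Set (ℤ×ℤ))) := by
      intro q hq
      exact subset_convexHull ℝ _ ⟨q, hq, rfl⟩
    have hQ2sub : Q2 ⊆ I \ Out := by
      intro q hq
      rw [Finset.mem_sdiff, hOutdef, Finset.mem_filter]
      have hqQ := ((hQ2mem q).1 hq).1
      exact ⟨hQ2I hq, fun h => h.2 (hQhull q hqQ)⟩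
    have hOutI : Out ⊆ I := by rw [hOutdef]; exact Finset.filter_subset _ _
    have hQ2card : Q2.card = Q.card - 2 := by
      rw [hQ2def, Finset.card_erase_of_mem (Finset.mem_erase.2 ⟨fun h => hne h.symm, hQij⟩),
        Finset.card_erase_of_mem hQ0]
      omega
    -- characterization of the hull-equality condition
    have hchar : ∀ T ∈ I.powerset,
        (convexHull ℝ (coe '' ((insert ((0:ℤ),(0:ℤ)) (insert ((i:ℤ),(j:ℤ)) T)
            : Finset (ℤ×ℤ)) : Set (ℤ×ℤ))) = convexHull ℝ (coe '' (Q : Set (ℤ×ℤ))))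
          ↔ (Q2 ⊆ T ∧ T ⊆ I \ Out) := by
      intro T hT
      have hTI : T ⊆ I := Finset.mem_powerset.1 hT
      constructor
      · intro heq
        constructor
        · intro q hq
          obtain ⟨hqQ, hq0, hqij⟩ := (hQ2mem q).1 hq
          have hext : coe q ∈ (convexHull ℝ (coe '' (Q : Set (ℤ×ℤ)))).extremePoints ℝ := by
            refine aux_extreme ⟨q, hqQ, rfl⟩ ?_
            have himg : coe '' (Q : Set (ℤ×ℤ)) \ {coe q}
                = coe '' ((Q.erase q : Finset (ℤ×ℤ)) : Set (ℤ×ℤ)) := by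
              rw [Finset.coe_erase, Set.image_diff hf, Set.image_singleton]
            rw [himg]
            exact hQvert q hqQ
          rw [← heq] at hext
          obtain ⟨w, hwS, hwq⟩ := extremePoints_convexHull_subset hext
          have hwqq : w = q := hf hwq
          subst hwqq
          rw [Finset.mem_coe, Finset.mem_insert, Finset.mem_insert] at hwS
          rcases hwS with rfl | rfl | hwT
          · exact absurd rfl hq0
          · exact absurd rfl hqij
          · exact hwT
        · intro p hp
          rw [Finset.mem_sdiff]
          refine ⟨hTI hp, fun hcontra => ?_⟩
          rw [hOutdef, Finset.mem_filter] at hcontra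
          apply hcontra.2
          rw [← heq]
          exact subset_convexHull ℝ _ ⟨p, by simp [hp], rfl⟩
      · rintro ⟨hQ2T, hTOut⟩
        apply Set.Subset.antisymm
        · apply convexHull_min _ (convex_convexHull ℝ _)
          rintro _ ⟨w, hw, rfl⟩
          rw [Finset.mem_coe, Finset.mem_insert, Finset.mem_insert] at hw
          rcases hw with rfl | rfl | hwT
          · exact hQhull _ hQ0
          · exact hQhull _ hQij
          · have hm := hTOut hwT
            rw [Finset.mem_sdiff] at hm
            by_contra hcon
            apply hm.2
            rw [hOutdef, Finset.mem_filter]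
            exact ⟨hm.1, hcon⟩
        · refine convexHull_mono (Set.image_mono ?_)
          intro q hq
          rw [Finset.mem_coe] at hq
          rw [Finset.mem_coe, Finset.mem_insert, Finset.mem_insert]
          by_cases h0 : q = ((0:ℤ),(0:ℤ))
          · exact Or.inl h0
          · by_cases hij : q = ((i:ℤ),(j:ℤ))
            · exact Or.inr (Or.inl hij)
            · exact Or.inr (Or.inr (hQ2T ((hQ2mem q).2 ⟨hq, h0, hij⟩)))
    have hfiltereq : I.powerset.filter (fun T =>
        convexHull ℝ (coe '' ((insert ((0:ℤ),(0:ℤ)) (insert ((i:ℤ),(j:ℤ)) T)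
          : Finset (ℤ×ℤ)) : Set (ℤ×ℤ))) = convexHull ℝ (coe '' (Q : Set (ℤ×ℤ))))
        = I.powerset.filter (fun T => Q2 ⊆ T ∧ T ⊆ I \ Out) :=
      Finset.filter_congr hchar
    rw [hfiltereq]
    have hIOcard : (I \ Out).card = I.card - Out.card := Finset.card_sdiff_of_subset hOutI
    have hMidcard : Mid.card = (I \ Out).card - Q2.card := Finset.card_sdiff_of_subset hQ2sub
    have hQ2le : Q2.card ≤ (I \ Out).card := Finset.card_le_card hQ2sub
    have hOutle : Out.card ≤ I.card := Finset.card_le_card hOutI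
    have hMidI : Mid ⊆ I \ Out := by rw [hMiddef]; exact Finset.sdiff_subset
    have hMidQ2 : Disjoint Mid Q2 := by rw [hMiddef]; exact Finset.sdiff_disjoint
    have hbij : (∑ T ∈ I.powerset.filter (fun T => Q2 ⊆ T ∧ T ⊆ I \ Out),
          x ^ T.card * (1-x) ^ (I.card - T.card))
        = ∑ S2 ∈ Mid.powerset,
            x ^ (Q2.card + S2.card) * (1-x) ^ (Out.card + (Mid.card - S2.card)) := by
      apply Finset.sum_nbij' (i := fun T => T \ Q2) (j := fun S2 => Q2 ∪ S2)
      · intro T hT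
        rw [Finset.mem_filter] at hT
        obtain ⟨hTpow, hQ2T, hTsub⟩ := hT
        rw [Finset.mem_powerset]
        intro a ha
        rw [Finset.mem_sdiff] at ha
        rw [hMiddef, Finset.mem_sdiff]
        exact ⟨hTsub ha.1, ha.2⟩
      · intro S2 hS2
        rw [Finset.mem_powerset] at hS2
        rw [Finset.mem_filter, Finset.mem_powerset]
        refine ⟨Finset.union_subset hQ2I ((hS2.trans hMidI).trans Finset.sdiff_subset),
          Finset.subset_union_left, Finset.union_subset hQ2sub (hS2.trans hMidI)⟩
      · intro T hT
        rw [Finset.mem_filter] at hT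
        exact Finset.union_sdiff_of_subset hT.2.1
      · intro S2 hS2
        rw [Finset.mem_powerset] at hS2
        exact Finset.union_sdiff_cancel_left
          ((hMidQ2.symm.mono_right hS2) : Disjoint Q2 S2)
      · intro T hT
        rw [Finset.mem_filter] at hT
        obtain ⟨hTpow, hQ2T, hTsub⟩ := hT
        have hc1 : (T \ Q2).card = T.card - Q2.card := Finset.card_sdiff_of_subset hQ2T
        have hc2 : Q2.card ≤ T.card := Finset.card_le_card hQ2T
        have hc3 : T.card ≤ (I \ Out).card := Finset.card_le_card hTsub
        rw [hc1]
        have e1 : Q2.card + (T.card - Q2.card) = T.card := by omega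
        have e2 : Out.card + (Mid.card - (T.card - Q2.card)) = I.card - T.card := by omega
        rw [e1, e2]
    rw [hbij]
    have hstep : ∀ S2 ∈ Mid.powerset,
        x ^ (Q2.card + S2.card) * (1-x) ^ (Out.card + (Mid.card - S2.card))
        = (x ^ Q2.card * (1-x) ^ Out.card) * (x ^ S2.card * (1-x) ^ (Mid.card - S2.card)) := by
      intro S2 _
      rw [pow_add, pow_add]
      ring
    rw [Finset.sum_congr rfl hstep, ← Finset.mul_sum, aux_binom x Mid, mul_one, hQ2card]
end
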